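/- arXiv:1405.3894 — 5 statements merged into one kernel-verified Lean document; each statement's English description precedes it below -/
import Mathlib

section
/- Let (p_t)_{t>0} be a family of Markov kernels on ℝ satisfying the Chapman–Kolmogorov equations. Then the following are equivalent. (a) There exists a family (q_t)_{t>0} of Markov kernels on ℝ satisfying the Chapman–Kolmogorov equations such that q_t(y, (−∞,x]) = p_t(x, [y,∞)) for all t > 0 and all x, y ∈ ℝ (Siegmund duality, i.e. duality of order 1). (b) For every t > 0 and y ∈ ℝ, the function x ↦ p_t(x, [y,∞)) is non-decreasing and right-continuous in x, tends to 1 as x → +∞, and tends to 0 as x → −∞. -/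
open MeasureTheory ProbabilityTheory Filter Set
open scoped ENNReal

-- Right continuity of the CDF of a finite measure.
lemma aux_rc (μ : Measure ℝ) [IsFiniteMeasure μ] (x : ℝ) :
    ContinuousWithinAt (fun x' => μ (Set.Iic x')) (Set.Ici x) x := by
  rw [← continuousWithinAt_Ioi_iff_Ici]
  have h := tendsto_measure_biInter_gt (μ := μ) (s := fun r => Set.Iic r) (a := x)
    (fun r _ => (measurableSet_Iic).nullMeasurableSet)
    (fun i j _ hij => Iic_subset_Iic.2 hij)
    ⟨x + 1, by linarith, measure_ne_top μ _⟩
  have hInter : ⋂ r > x, Set.Iic r = Set.Iic x := by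
    ext z
    simp only [Set.mem_iInter, Set.mem_Iic]
    constructor
    · intro h
      by_contra hzx
      push_neg at hzx
      obtain ⟨r, hxr, hrz⟩ := exists_between hzx
      exact absurd (h r hxr) (not_le.2 hrz)
    · exact fun hz r hr => hz.trans hr.le
  rwa [hInter] at h

lemma aux_atBot (μ : Measure ℝ) [IsFiniteMeasure μ] :
    Tendsto (fun x => μ (Set.Iic x)) atBot (nhds 0) := by
  have h := tendsto_measure_iInter_atBot (μ := μ) (s := fun r : ℝ => Set.Iic r)
    (fun r => measurableSet_Iic.nullMeasurableSet) (fun i j hij => Iic_subset_Iic.2 hij)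
    ⟨0, measure_ne_top μ _⟩
  have hInter : ⋂ r : ℝ, Set.Iic r = ∅ := by
    ext z
    simp only [Set.mem_iInter, Set.mem_Iic, Set.mem_empty_iff_false, iff_false, not_forall,
      not_le]
    exact ⟨z - 1, by linarith⟩
  rwa [hInter, measure_empty] at h

-- Fubini swap
lemma aux_fubini (μ ν : Measure ℝ) [IsProbabilityMeasure μ] [IsProbabilityMeasure ν] :
    ∫⁻ z, μ (Set.Iic z) ∂ν = ∫⁻ w, ν (Set.Ici w) ∂μ := by
  have hs : MeasurableSet {p : ℝ × ℝ | p.1 ≤ p.2} := measurableSet_le measurable_fst measurable_snd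
  have h1 := Measure.prod_apply (μ := μ) (ν := ν) hs
  have h2 := Measure.prod_apply_symm (μ := μ) (ν := ν) hs
  have e1 : ∀ w : ℝ, Prod.mk w ⁻¹' {p : ℝ × ℝ | p.1 ≤ p.2} = Set.Ici w := by
    intro w; ext z; simp [Set.mem_Ici]
  have e2 : ∀ z : ℝ, (fun x => (x, z)) ⁻¹' {p : ℝ × ℝ | p.1 ≤ p.2} = Set.Iic z := by
    intro z; ext w; simp [Set.mem_Iic]
  simp only [e1] at h1
  simp only [e2] at h2
  rw [← h1, h2]

noncomputable def stieltjesOfENN (f : ℝ → ℝ≥0∞) (hm : Monotone f)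
    (hrc : ∀ x, ContinuousWithinAt f (Set.Ici x) x) (hne : ∀ x, f x ≠ ⊤) :
    StieltjesFunction ℝ where
  toFun := fun x => (f x).toReal
  mono' a b hab := ENNReal.toReal_mono (hne b) (hm hab)
  right_continuous' x := (ENNReal.tendsto_toReal (hne x)).comp (hrc x)

lemma stieltjesOfENN_measure_Iic (f : ℝ → ℝ≥0∞) (hm : Monotone f)
    (hrc : ∀ x, ContinuousWithinAt f (Set.Ici x) x) (hne : ∀ x, f x ≠ ⊤)
    (h0 : Tendsto f atBot (nhds 0)) (x : ℝ) :
    (stieltjesOfENN f hm hrc hne).measure (Set.Iic x) = f x := by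
  have h0' : Tendsto (fun x => (f x).toReal) atBot (nhds 0) := by
    have := (ENNReal.tendsto_toReal (a := 0) (by simp)).comp h0
    simpa [Function.comp_def] using this
  rw [StieltjesFunction.measure_Iic _ h0' x]
  simp [stieltjesOfENN, ENNReal.ofReal_toReal (hne x)]

lemma stieltjesOfENN_isProb (f : ℝ → ℝ≥0∞) (hm : Monotone f)
    (hrc : ∀ x, ContinuousWithinAt f (Set.Ici x) x) (hne : ∀ x, f x ≠ ⊤)
    (h0 : Tendsto f atBot (nhds 0)) (h1 : Tendsto f atTop (nhds 1)) :
    IsProbabilityMeasure (stieltjesOfENN f hm hrc hne).measure := by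
  constructor
  have h0' : Tendsto (fun x => (f x).toReal) atBot (nhds 0) := by
    have := (ENNReal.tendsto_toReal (a := 0) (by simp)).comp h0
    simpa [Function.comp_def] using this
  have h1' : Tendsto (fun x => (f x).toReal) atTop (nhds 1) := by
    have := (ENNReal.tendsto_toReal (a := 1) (by simp)).comp h1
    simpa [Function.comp_def] using this
  rw [StieltjesFunction.measure_univ _ h0' h1']
  norm_num

theorem stmt4
    (p : ℝ → Kernel ℝ ℝ)
    (hp_markov : ∀ t, 0 < t → IsMarkovKernel (p t))
    -- Chapman–Kolmogorov for p
    (hCK : ∀ s t, 0 < s → 0 < t → ∀ x, ∀ A : Set ℝ, MeasurableSet A →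
      p (t + s) x A = ∫⁻ z, p s z A ∂(p t x)) :
    -- (a) Siegmund dual exists
    (∃ q : ℝ → Kernel ℝ ℝ,
      (∀ t, 0 < t → IsMarkovKernel (q t)) ∧
      (∀ s t, 0 < s → 0 < t → ∀ y, ∀ A : Set ℝ, MeasurableSet A →
        q (t + s) y A = ∫⁻ w, q t w A ∂(q s y)) ∧
      (∀ t, 0 < t → ∀ x y : ℝ, q t y (Set.Iic x) = p t x (Set.Ici y)))
    ↔
    -- (b) stochastic monotonicity, right continuity and limits at ±∞
    (∀ t, 0 < t → ∀ y : ℝ,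
      Monotone (fun x => p t x (Set.Ici y)) ∧
      (∀ x : ℝ, ContinuousWithinAt (fun x' => p t x' (Set.Ici y)) (Set.Ici x) x) ∧
      Tendsto (fun x => p t x (Set.Ici y)) atTop (nhds 1) ∧
      Tendsto (fun x => p t x (Set.Ici y)) atBot (nhds 0)) := by
  constructor
  · rintro ⟨q, hqM, -, hdual⟩ t ht y
    haveI := hqM t ht
    haveI : IsProbabilityMeasure (q t y) := inferInstance
    have heq : (fun x => p t x (Set.Ici y)) = fun x => q t y (Set.Iic x) :=
      funext fun x => (hdual t ht x y).symm
    rw [heq]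
    refine ⟨fun a b hab => measure_mono (Set.Iic_subset_Iic.2 hab),
      fun x => aux_rc (q t y) x, ?_, aux_atBot (q t y)⟩
    have := tendsto_measure_Iic_atTop (q t y)
    rwa [measure_univ] at this
  · intro hb
    classical
    have hne : ∀ t, 0 < t → ∀ y x : ℝ, p t x (Set.Ici y) ≠ ⊤ := fun t ht y x => by
      haveI := hp_markov t ht; exact measure_ne_top _ _
    let F : ∀ t : ℝ, 0 < t → ℝ → StieltjesFunction ℝ := fun t ht y =>
      stieltjesOfENN (fun x => p t x (Set.Ici y)) (hb t ht y).1 (hb t ht y).2.1 (hne t ht y)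
    have hFIic : ∀ (t : ℝ) (ht : 0 < t) (y x : ℝ), (F t ht y).measure (Set.Iic x) = p t x (Set.Ici y) :=
      fun t ht y x => stieltjesOfENN_measure_Iic _ _ _ _ (hb t ht y).2.2.2 x
    have hFprob : ∀ (t : ℝ) (ht : 0 < t) (y : ℝ), IsProbabilityMeasure (F t ht y).measure :=
      fun t ht y => stieltjesOfENN_isProb _ _ _ _ (hb t ht y).2.2.2 (hb t ht y).2.2.1
    have hmeas : ∀ (t : ℝ) (ht : 0 < t), Measurable fun y => (F t ht y).measure := by
      intro t ht
      rw [Measure.measurable_measure]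
      refine fun s hs => MeasurableSpace.induction_on_inter
        (C := fun s _ => Measurable fun y => (F t ht y).measure s)
        (borel_eq_generateFrom_Iic ℝ) isPiSystem_Iic ?_ ?_ ?_ ?_ s hs
      · simp
      · rintro S ⟨u, rfl⟩
        simp_rw [hFIic t ht _ u]
        exact Antitone.measurable (fun y1 y2 h => measure_mono (Set.Ici_subset_Ici.2 h))
      · intro s hsm hm
        have : (fun y => (F t ht y).measure sᶜ) = fun y => 1 - (F t ht y).measure s := by
          ext y
          haveI := hFprob t ht y
          rw [measure_compl hsm (measure_ne_top _ _), measure_univ]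
        rw [this]
        exact Measurable.const_sub hm 1
      · intro g hdisj hgm hm
        simp_rw [measure_iUnion hdisj hgm]
        exact Measurable.ennreal_tsum hm
    refine ⟨fun t => if ht : 0 < t then ⟨fun y => (F t ht y).measure, hmeas t ht⟩ else 0,
      ?_, ?_, ?_⟩ <;>
      [skip; skip; skip]
    case _ =>
      intro t ht
      constructor
      intro y
      simp only [dif_pos ht]
      exact hFprob t ht y
    case _ =>
      intro s t hs hts y A hA
      have hts' : (0:ℝ) < t + s := by linarith
      haveI := hp_markov t hts
      haveI := hp_markov s hs
      set Q : ℝ → Kernel ℝ ℝ :=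
        fun t => if ht : 0 < t then ⟨fun y => (F t ht y).measure, hmeas t ht⟩ else 0 with hQ
      have hq : ∀ (t : ℝ) (ht : 0 < t) (y : ℝ), Q t y = (F t ht y).measure := by
        intro t ht y
        simp only [hQ, dif_pos ht]
        rfl
      have hdual : ∀ (t : ℝ) (ht : 0 < t) (x y : ℝ), Q t y (Set.Iic x) = p t x (Set.Ici y) := by
        intro t ht x y
        rw [hq t ht]
        exact hFIic t ht y x
      have hbind : ∀ B : Set ℝ, MeasurableSet B →
          ((Q s y).bind (Q t)) B = ∫⁻ w, Q t w B ∂(Q s y) :=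
        fun B hB => Measure.bind_apply hB (Q t).measurable.aemeasurable
      haveI : IsProbabilityMeasure (Q s y) := by rw [hq s hs]; exact hFprob s hs y
      haveI : IsProbabilityMeasure (Q (t + s) y) := by
        rw [hq (t + s) hts']; exact hFprob (t + s) hts' y
      have hext : Q (t + s) y = (Q s y).bind (Q t) := by
        refine MeasureTheory.ext_of_generate_finite (Set.range Set.Iic)
          (borel_eq_generateFrom_Iic ℝ) isPiSystem_Iic ?_ ?_
        · rintro B ⟨x, rfl⟩
          rw [hbind _ measurableSet_Iic, hdual (t + s) hts' x y,
            hCK s t hs hts x _ measurableSet_Ici]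
          have e1 : ∀ z : ℝ, p s z (Set.Ici y) = Q s y (Set.Iic z) :=
            fun z => (hdual s hs z y).symm
          have e2 : ∀ w : ℝ, Q t w (Set.Iic x) = p t x (Set.Ici w) :=
            fun w => hdual t hts x w
          simp_rw [e1, e2]
          exact aux_fubini (Q s y) (p t x)
        · rw [hbind _ MeasurableSet.univ]
          have h1 : ∀ w : ℝ, Q t w Set.univ = 1 := by
            intro w
            haveI : IsProbabilityMeasure (Q t w) := by rw [hq t hts]; exact hFprob t hts w
            exact measure_univ
          simp_rw [h1, lintegral_one, measure_univ]
      calc Q (t + s) y A = ((Q s y).bind (Q t)) A := by rw [hext]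
        _ = ∫⁻ w, Q t w A ∂(Q s y) := hbind A hA
    case _ =>
      intro t ht x y
      simp only [dif_pos ht]
      exact hFIic t ht y x
end

section
/- Let (p_t)_{t>0} be a family of Markov kernels on ℝ satisfying the Chapman–Kolmogorov equations such that ∫_ℝ (z−y)_+ p_t(x,dz) < ∞ for all t > 0 and x,y ∈ ℝ, and set h_{t,y}(x) = ∫_ℝ (z−y)_+ p_t(x,dz). Then the following are equivalent. (a) There exists a family (q_t)_{t>0} of Markov kernels on ℝ satisfying the Chapman–Kolmogorov equations such that ∫_ℝ (x−w)_+ q_t(y,dw) = h_{t,y}(x) for all t > 0 and x,y ∈ ℝ (put–call symmetry, i.e. duality of order 2). (b) For every t > 0 and y ∈ ℝ, the function x ↦ h_{t,y}(x) is convex on ℝ, h_{t,y}(x) → 0 as x → −∞, and the right derivative of h_{t,y} tends to 1 as x → +∞. -/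
open MeasureTheory ProbabilityTheory Filter Set

noncomputable section

namespace Stmt6Aux

/-! ### Generic facts about put prices of probability measures -/

lemma put_meas (x : ℝ) : Measurable fun w : ℝ => max (x - w) 0 :=
  (measurable_const.sub measurable_id).max measurable_const

lemma put_cont (x : ℝ) : Continuous fun w : ℝ => max (x - w) 0 :=
  (continuous_const.sub continuous_id).max continuous_const

lemma put_hasDerivWithinAt (μ : Measure ℝ) [IsProbabilityMeasure μ]
    (hi : ∀ x : ℝ, Integrable (fun w => max (x - w) 0) μ) (x : ℝ) :
    HasDerivWithinAt (fun u => ∫ w, max (u - w) 0 ∂μ) (μ (Iic x)).toReal (Ioi x) x := by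
  set f : ℝ → ℝ := fun u => ∫ w, max (u - w) 0 ∂μ with hf
  rw [hasDerivWithinAt_iff_tendsto_slope' notMem_Ioi_self]
  have hslope : ∀ᶠ u in nhdsWithin x (Ioi x),
      ∫ w, (max (u - w) 0 - max (x - w) 0) / (u - x) ∂μ = slope f x u := by
    filter_upwards [self_mem_nhdsWithin] with u _
    rw [slope_def_field, hf]
    rw [← integral_sub (hi u) (hi x), ← integral_div]
  have key : Tendsto (fun u => ∫ w, (max (u - w) 0 - max (x - w) 0) / (u - x) ∂μ)
      (nhdsWithin x (Ioi x)) (nhds (∫ w, (Iic x).indicator (1 : ℝ → ℝ) w ∂μ)) := by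
    apply tendsto_integral_filter_of_dominated_convergence (fun _ => (1 : ℝ))
    · filter_upwards [self_mem_nhdsWithin] with u _
      exact (((put_cont u).sub (put_cont x)).div_const _).aestronglyMeasurable
    · filter_upwards [self_mem_nhdsWithin] with u hu
      refine Filter.Eventually.of_forall fun w => ?_
      have hux : 0 < u - x := sub_pos.mpr (mem_Ioi.mp hu)
      have h1 : 0 ≤ max (u - w) 0 - max (x - w) 0 :=
        sub_nonneg.mpr (max_le_max (by linarith [mem_Ioi.mp hu]) le_rfl)
      have h2 : max (u - w) 0 - max (x - w) 0 ≤ u - x := by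
        rcases le_total (u - w) 0 with hc | hc
        · rw [max_eq_right hc]
          have := le_max_right (x - w) (0 : ℝ)
          linarith
        · rw [max_eq_left hc]
          have := le_max_left (x - w) (0 : ℝ)
          linarith
      rw [Real.norm_eq_abs, abs_of_nonneg (div_nonneg h1 hux.le), div_le_one hux]
      exact h2
    · exact integrable_const 1
    · refine Filter.Eventually.of_forall fun w => ?_
      rcases le_or_gt w x with hw | hw
      · rw [Set.indicator_of_mem (mem_Iic.mpr hw)]
        refine Tendsto.congr' ?_ tendsto_const_nhds
        filter_upwards [self_mem_nhdsWithin] with u hu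
        have hux : x < u := mem_Ioi.mp hu
        have h1 : max (u - w) 0 = u - w := max_eq_left (by linarith)
        have h2 : max (x - w) 0 = x - w := max_eq_left (by linarith)
        rw [h1, h2]
        have : u - w - (x - w) = u - x := by ring
        rw [this, div_self (ne_of_gt (by linarith : (0:ℝ) < u - x))]
        simp
      · rw [Set.indicator_of_notMem (by simp only [mem_Iic, not_le]; exact hw)]
        refine Tendsto.congr' ?_ tendsto_const_nhds
        filter_upwards [Ioo_mem_nhdsGT_of_mem ⟨le_refl x, hw⟩] with u hu
        have h1 : max (u - w) 0 = 0 := max_eq_right (by linarith [hu.2])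
        have h2 : max (x - w) 0 = 0 := max_eq_right (by linarith)
        rw [h1, h2]
        simp
  have := key.congr' hslope

  rwa [integral_indicator_one measurableSet_Iic] at this

lemma put_convex (μ : Measure ℝ) [IsProbabilityMeasure μ]
    (hi : ∀ x : ℝ, Integrable (fun w => max (x - w) 0) μ) :
    ConvexOn ℝ Set.univ (fun u => ∫ w, max (u - w) 0 ∂μ) := by
  refine ⟨convex_univ, fun x _ y _ a b ha hb hab => ?_⟩
  have hptw : ∀ w, max (a • x + b • y - w) 0 ≤ a * max (x - w) 0 + b * max (y - w) 0 := by
    intro w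
    refine max_le ?_ ?_
    · have h1 : a * (x - w) ≤ a * max (x - w) 0 :=
        mul_le_mul_of_nonneg_left (le_max_left _ _) ha
      have h2 : b * (y - w) ≤ b * max (y - w) 0 :=
        mul_le_mul_of_nonneg_left (le_max_left _ _) hb
      calc a • x + b • y - w = a * (x - w) + b * (y - w) := by
            simp only [smul_eq_mul]; linear_combination w * hab
        _ ≤ a * max (x - w) 0 + b * max (y - w) 0 := add_le_add h1 h2
    · exact add_nonneg (mul_nonneg ha (le_max_right _ _)) (mul_nonneg hb (le_max_right _ _))
  calc ∫ w, max (a • x + b • y - w) 0 ∂μ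
      ≤ ∫ w, (a * max (x - w) 0 + b * max (y - w) 0) ∂μ :=
        integral_mono (hi _) (((hi x).const_mul a).add ((hi y).const_mul b)) hptw
    _ = a • ∫ w, max (x - w) 0 ∂μ + b • ∫ w, max (y - w) 0 ∂μ := by
        rw [integral_add ((hi x).const_mul a) ((hi y).const_mul b),
          integral_const_mul, integral_const_mul]
        simp [smul_eq_mul]

lemma put_tendsto_atBot (μ : Measure ℝ) [IsProbabilityMeasure μ]
    (hi : ∀ x : ℝ, Integrable (fun w => max (x - w) 0) μ) :
    Tendsto (fun u => ∫ w, max (u - w) 0 ∂μ) atBot (nhds 0) := by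
  have key : Tendsto (fun u => ∫ w, max (u - w) 0 ∂μ) atBot
      (nhds (∫ _w, (0 : ℝ) ∂μ)) := by
    apply tendsto_integral_filter_of_dominated_convergence (fun w => max (0 - w) 0)
    · exact Filter.Eventually.of_forall fun u => (put_cont u).aestronglyMeasurable
    · filter_upwards [eventually_le_atBot (0 : ℝ)] with u hu
      refine Filter.Eventually.of_forall fun w => ?_
      rw [Real.norm_eq_abs, abs_of_nonneg (le_max_right _ _)]
      exact max_le_max (by linarith) le_rfl
    · exact hi 0
    · refine Filter.Eventually.of_forall fun w => ?_
      refine Tendsto.congr' ?_ tendsto_const_nhds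
      filter_upwards [eventually_le_atBot w] with u hu
      exact (max_eq_right (by linarith)).symm
  simpa using key

lemma put_derivWithin (μ : Measure ℝ) [IsProbabilityMeasure μ]
    (hi : ∀ x : ℝ, Integrable (fun w => max (x - w) 0) μ) (x : ℝ) :
    derivWithin (fun u => ∫ w, max (u - w) 0 ∂μ) (Ioi x) x = (μ (Iic x)).toReal :=
  (put_hasDerivWithinAt μ hi x).derivWithin (uniqueDiffWithinAt_Ioi x)

lemma put_deriv_tendsto (μ : Measure ℝ) [IsProbabilityMeasure μ]
    (hi : ∀ x : ℝ, Integrable (fun w => max (x - w) 0) μ) :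
    Tendsto (fun x => derivWithin (fun u => ∫ w, max (u - w) 0 ∂μ) (Ioi x) x) atTop (nhds 1) := by
  have heq : ∀ x : ℝ, derivWithin (fun u => ∫ w, max (u - w) 0 ∂μ) (Ioi x) x
      = (μ (Iic x)).toReal := put_derivWithin μ hi
  rw [tendsto_congr heq]
  have h1 : Tendsto (fun x : ℝ => μ (Iic x)) atTop (nhds (μ univ)) :=
    tendsto_measure_Iic_atTop μ
  have h2 := (ENNReal.tendsto_toReal (by simp [measure_univ] : μ univ ≠ ⊤)).comp h1
  simpa [measure_univ, Function.comp_def] using h2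

lemma put_unique (μ ν : Measure ℝ) [IsProbabilityMeasure μ] [IsProbabilityMeasure ν]
    (hiμ : ∀ x : ℝ, Integrable (fun w => max (x - w) 0) μ)
    (hiν : ∀ x : ℝ, Integrable (fun w => max (x - w) 0) ν)
    (hput : ∀ x : ℝ, ∫ w, max (x - w) 0 ∂μ = ∫ w, max (x - w) 0 ∂ν) : μ = ν := by
  refine Measure.ext_of_Iic μ ν fun a => ?_
  have h1 := put_hasDerivWithinAt μ hiμ a
  have h2 := put_hasDerivWithinAt ν hiν a
  have hfe : (fun u => ∫ w, max (u - w) 0 ∂μ) = fun u => ∫ w, max (u - w) 0 ∂ν :=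
    funext fun u => hput u
  rw [hfe] at h1
  have heq : (μ (Iic a)).toReal = (ν (Iic a)).toReal :=
    (h1.derivWithin (uniqueDiffWithinAt_Ioi a)).symm.trans
      (h2.derivWithin (uniqueDiffWithinAt_Ioi a))
  exact (ENNReal.toReal_eq_toReal_iff' (measure_ne_top μ _) (measure_ne_top ν _)).mp heq

/-! ### Right derivative of a convex function -/

def rd (g : ℝ → ℝ) (x : ℝ) : ℝ := sInf (slope g x '' Ioi x)

variable {g : ℝ → ℝ}

lemma slope_monoOn (hg : ConvexOn ℝ univ g) (x : ℝ) : MonotoneOn (slope g x) (Ioi x) :=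
  (hg.slope_mono (mem_univ x)).mono (fun u hu => ⟨mem_univ u, ne_of_gt hu⟩)

lemma bddBelow_slope (hg : ConvexOn ℝ univ g) (x : ℝ) : BddBelow (slope g x '' Ioi x) := by
  refine ⟨slope g x (x - 1), ?_⟩
  rintro b ⟨u, hu, rfl⟩
  exact hg.slope_mono (mem_univ x) ⟨mem_univ _, by simp⟩ ⟨mem_univ _, ne_of_gt hu⟩
    (by linarith [mem_Ioi.mp hu])

lemma rd_le_slope (hg : ConvexOn ℝ univ g) {x u : ℝ} (hu : x < u) : rd g x ≤ slope g x u :=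
  csInf_le (bddBelow_slope hg x) ⟨u, hu, rfl⟩

lemma slope_le_rd (hg : ConvexOn ℝ univ g) {w x : ℝ} (hw : w < x) : slope g w x ≤ rd g x := by
  refine le_csInf ⟨slope g x (x + 1), ⟨x + 1, by simp, rfl⟩⟩ ?_
  rintro b ⟨u, hu, rfl⟩
  rw [slope_comm]
  exact hg.slope_mono (mem_univ x) ⟨mem_univ _, ne_of_lt hw⟩ ⟨mem_univ _, ne_of_gt hu⟩
    (hw.le.trans (mem_Ioi.mp hu).le)

lemma hasDerivWithinAt_rd (hg : ConvexOn ℝ univ g) (x : ℝ) :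
    HasDerivWithinAt g (rd g x) (Ioi x) x := by
  rw [hasDerivWithinAt_iff_tendsto_slope' (notMem_Ioi_self)]
  exact (slope_monoOn hg x).tendsto_nhdsGT (bddBelow_slope hg x)

lemma rd_mono (hg : ConvexOn ℝ univ g) : Monotone (rd g) := by
  intro x y hxy
  rcases eq_or_lt_of_le hxy with rfl | hxy
  · exact le_refl _
  calc rd g x ≤ slope g x y := rd_le_slope hg hxy
    _ ≤ rd g y := slope_le_rd hg hxy

lemma gcont (hg : ConvexOn ℝ univ g) : Continuous g := by
  rw [← continuousOn_univ]
  exact hg.continuousOn isOpen_univ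

lemma tendsto_rd_right (hg : ConvexOn ℝ univ g) (x : ℝ) :
    Tendsto (rd g) (nhdsWithin x (Ioi x)) (nhds (rd g x)) := by
  have hmono : MonotoneOn (rd g) (Ioi x) := (rd_mono hg).monotoneOn _
  have hbdd : BddBelow (rd g '' Ioi x) := by
    refine ⟨rd g x, ?_⟩
    rintro b ⟨u, hu, rfl⟩
    exact rd_mono hg (le_of_lt hu)
  have htends := hmono.tendsto_nhdsGT hbdd
  have hL : sInf (rd g '' Ioi x) = rd g x := by
    refine le_antisymm ?_ ?_
    · -- sInf ≤ rd g x : show sInf ≤ slope g x u for all u > x, then ≤ csInf of slopes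
      have key : ∀ u, x < u → sInf (rd g '' Ioi x) ≤ slope g x u := by
        intro u hu
        have tend : Tendsto (fun y => slope g y u) (nhdsWithin x (Ioi x)) (nhds (slope g x u)) := by
          rw [slope_def_field]
          have h1 : Tendsto (fun y => (g u - g y) / (u - y)) (nhdsWithin x (Ioi x))
              (nhds ((g u - g x) / (u - x))) := by
            apply Tendsto.div
            · exact (tendsto_const_nhds.sub ((gcont hg).tendsto x)).mono_left
                nhdsWithin_le_nhds
            · exact (tendsto_const_nhds.sub tendsto_id).mono_left nhdsWithin_le_nhds
            · exact sub_ne_zero_of_ne (ne_of_gt hu)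
          convert h1 using 2 with y
          rw [slope_def_field]
        refine ge_of_tendsto tend ?_
        filter_upwards [Ioo_mem_nhdsGT_of_mem ⟨le_refl x, hu⟩] with y hy
        calc sInf (rd g '' Ioi x) ≤ rd g y := csInf_le hbdd ⟨y, hy.1, rfl⟩
          _ ≤ slope g y u := rd_le_slope hg hy.2
      refine le_csInf ⟨slope g x (x+1), ⟨x+1, by simp, rfl⟩⟩ ?_
      rintro b ⟨u, hu, rfl⟩
      exact key u hu
    · refine le_csInf (⟨rd g (x+1), ⟨x+1, by simp, rfl⟩⟩) ?_
      rintro b ⟨u, hu, rfl⟩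
      exact rd_mono hg (le_of_lt hu)
  rwa [hL] at htends

lemma iInf_rat_gt_rd_eq (hg : ConvexOn ℝ univ g) (x : ℝ) :
    ⨅ q : {q' : ℚ // x < (q' : ℝ)}, rd g q = rd g x := by
  obtain ⟨q₀, hq₀⟩ := exists_rat_gt x
  have hne : Nonempty {q' : ℚ // x < (q' : ℝ)} := ⟨⟨q₀, hq₀⟩⟩
  have hbdd : BddBelow (Set.range fun q : {q' : ℚ // x < (q' : ℝ)} => rd g (q : ℚ)) := by
    refine ⟨rd g x, ?_⟩
    rintro b ⟨q, rfl⟩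
    exact rd_mono hg (le_of_lt q.2)
  refine le_antisymm ?_ (le_ciInf fun q => rd_mono hg (le_of_lt q.2))
  refine le_of_forall_pos_le_add fun ε hε => ?_
  have hev : ∀ᶠ y in nhdsWithin x (Ioi x), rd g y < rd g x + ε :=
    (tendsto_rd_right hg x).eventually (eventually_lt_nhds (by linarith))
  obtain ⟨u, hu, hsub⟩ := (nhdsGT_basis x).eventually_iff.mp hev
  obtain ⟨q, hq1, hq2⟩ := exists_rat_btwn hu
  have hq : rd g (q : ℚ) < rd g x + ε := hsub ⟨hq1, hq2⟩
  exact le_of_lt (lt_of_le_of_lt (ciInf_le hbdd ⟨q, hq1⟩) hq)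

lemma rd_eq_iInf_rat_slope (hg : ConvexOn ℝ univ g) (x : ℝ) :
    rd g x = ⨅ q : {q' : ℚ // x < (q' : ℝ)}, slope g x q := by
  obtain ⟨q₀, hq₀⟩ := exists_rat_gt x
  have hne : Nonempty {q' : ℚ // x < (q' : ℝ)} := ⟨⟨q₀, hq₀⟩⟩
  have hbdd : BddBelow (Set.range fun q : {q' : ℚ // x < (q' : ℝ)} => slope g x (q : ℚ)) := by
    refine ⟨slope g x (x - 1), ?_⟩
    rintro b ⟨q, rfl⟩
    exact hg.slope_mono (mem_univ x) ⟨mem_univ _, by simp⟩ ⟨mem_univ _, ne_of_gt q.2⟩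
      (by linarith [q.2])
  refine le_antisymm (le_ciInf fun q => rd_le_slope hg q.2) ?_
  refine le_csInf ⟨slope g x (x+1), ⟨x+1, by simp, rfl⟩⟩ ?_
  rintro b ⟨u, hu, rfl⟩
  obtain ⟨q, hq1, hq2⟩ := exists_rat_btwn (mem_Ioi.mp hu)
  refine le_trans (ciInf_le hbdd ⟨q, hq1⟩) ?_
  exact slope_monoOn hg x hq1 hu (le_of_lt hq2)

lemma derivWithin_eq_rd (hg : ConvexOn ℝ univ g) (x : ℝ) :
    derivWithin g (Ioi x) x = rd g x :=
  (hasDerivWithinAt_rd hg x).derivWithin (uniqueDiffWithinAt_Ioi x)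

lemma slope_sub (w x : ℝ) (hw : w < x) : g w = g x - slope g w x * (x - w) := by
  rw [slope_def_field]
  have hxw : x - w ≠ 0 := sub_ne_zero.mpr (ne_of_gt hw)
  field_simp
  ring

section Boundary

variable (hg : ConvexOn ℝ univ g) (h0 : Tendsto g atBot (nhds 0))

include hg h0

lemma rd_nonneg (x : ℝ) : 0 ≤ rd g x := by
  by_contra hneg
  push_neg at hneg
  set c := -rd g x with hc
  have hcpos : 0 < c := by simp [hc]; linarith
  -- g w ≥ g x + c * (x - w) for w < x
  have key : ∀ w, w < x → g x + c * (x - w) ≤ g w := by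
    intro w hw
    have h1 : slope g w x ≤ rd g x := slope_le_rd hg hw
    have h2 : g w = g x - slope g w x * (x - w) := slope_sub w x hw
    have h3 : x - w > 0 := by linarith
    nlinarith
  -- but g → 0 at -∞
  have hev : ∀ᶠ w in atBot, g w < 1 :=
    h0.eventually (eventually_lt_nhds one_pos)
  obtain ⟨b, hb⟩ := hev.exists_forall_of_atBot
  set w := min b (x - (|g x| + 1) / c) with hw
  have hwb : w ≤ b := min_le_left _ _
  have hwx : w < x := by
    have : (|g x| + 1) / c > 0 := div_pos (by positivity) hcpos
    calc w ≤ x - (|g x| + 1) / c := min_le_right _ _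
      _ < x := by linarith
  have h1 : g x + c * (x - w) ≤ g w := key w hwx
  have h2 : g w < 1 := hb w hwb
  have h3 : (|g x| + 1) / c ≤ x - w := by
    have := min_le_right b (x - (|g x| + 1) / c)
    linarith [this]
  have h4 : |g x| + 1 ≤ c * (x - w) := by
    rw [div_le_iff₀ hcpos] at h3
    linarith [h3]
  have := neg_abs_le (g x)
  linarith

lemma g_mono : Monotone g := by
  intro x y hxy
  rcases eq_or_lt_of_le hxy with rfl | hxy
  · exact le_refl _
  have h1 : rd g x ≤ slope g x y := rd_le_slope hg hxy
  have h2 : 0 ≤ rd g x := rd_nonneg hg h0 x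
  have h3 : slope g x y = (g y - g x) / (y - x) := slope_def_field g x y
  have h4 : 0 < y - x := by linarith
  have h5 : (0:ℝ) ≤ (g y - g x) / (y - x) := h3 ▸ le_trans h2 h1
  have h6 := (le_div_iff₀ h4).mp h5
  linarith

lemma g_nonneg (x : ℝ) : 0 ≤ g x := by
  refine le_of_tendsto h0 ?_
  filter_upwards [eventually_le_atBot x] with w hw
  exact g_mono hg h0 hw

lemma rd_tendsto_atBot : Tendsto (rd g) atBot (nhds 0) := by
  rw [tendsto_order]
  constructor
  · intro a ha
    exact Eventually.of_forall fun w => lt_of_lt_of_le ha (rd_nonneg hg h0 w)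
  · intro b hb
    -- find a₀ with rd g a₀ < b
    have hex : ∃ a₀ : ℝ, rd g a₀ < b := by
      by_contra hcon
      push_neg at hcon
      -- then g a ≤ g 0 + b * a → -∞
      set a : ℝ := min (-1) ((-(g 0) - 1) / b) with ha
      have ha0 : a < 0 := lt_of_le_of_lt (min_le_left _ _) (by norm_num)
      have h1 : b ≤ rd g a := hcon a
      have h2 : rd g a ≤ slope g a 0 := rd_le_slope hg ha0
      have h3 : slope g a 0 = (g 0 - g a) / (0 - a) := slope_def_field g a 0
      have h4 : 0 < -a := by linarith
      -- b ≤ (g 0 - g a)/(-a)  ⇒  g a ≤ g 0 + b * a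
      have h2' : b ≤ (g 0 - g a) / (-a) := by
        rw [h3] at h2
        have : (0:ℝ) - a = -a := by ring
        rw [this] at h2
        exact le_trans h1 h2
      have h5 : b * (-a) ≤ g 0 - g a := (le_div_iff₀ h4).mp h2'
      have h6 : a ≤ (-(g 0) - 1) / b := min_le_right _ _
      have h7 : a * b ≤ -(g 0) - 1 := (le_div_iff₀ hb).mp h6
      have h8 : 0 ≤ g a := g_nonneg hg h0 a
      nlinarith
    obtain ⟨a₀, ha₀⟩ := hex
    filter_upwards [eventually_le_atBot a₀] with w hw
    exact lt_of_le_of_lt (rd_mono hg hw) ha₀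

omit hg h0 in
lemma rd_measurable (hg : ConvexOn ℝ univ g) : Measurable (rd g) :=
  (rd_mono hg).measurable

lemma lintegral_rd_Ioo {a x : ℝ} (ha : a ≤ x) :
    ∫⁻ u in Ioo a x, ENNReal.ofReal (rd g u) = ENNReal.ofReal (g x - g a) := by
  rw [setLIntegral_congr Ioo_ae_eq_Ioc]
  rw [← ofReal_integral_eq_lintegral_ofReal]
  · congr 1
    rw [← intervalIntegral.integral_of_le ha]
    exact intervalIntegral.integral_eq_sub_of_hasDeriv_right_of_le ha
      ((gcont hg).continuousOn)
      (fun u _ => hasDerivWithinAt_rd hg u) ((rd_mono hg).intervalIntegrable)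
  · exact (intervalIntegrable_iff_integrableOn_Ioc_of_le ha).mp ((rd_mono hg).intervalIntegrable)
  · exact Filter.Eventually.of_forall fun u => rd_nonneg hg h0 u

lemma lintegral_rd_Iio (x : ℝ) :
    ∫⁻ u in Iio x, ENNReal.ofReal (rd g u) = ENNReal.ofReal (g x) := by
  set F : ℝ → ENNReal := fun u => ENNReal.ofReal (rd g u) with hF
  have hFm : Measurable F := (rd_measurable hg).ennreal_ofReal
  set s : ℕ → Set ℝ := fun n => Ioo (x - (n + 1)) x with hs
  have hsub : ∀ n, s n ⊆ Iio x := fun n u hu => hu.2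
  have hmono : Monotone fun n => (s n).indicator F := by
    intro m n hmn
    apply Set.indicator_le_indicator_of_subset
    · intro u hu
      refine ⟨?_, hu.2⟩
      have : (m : ℝ) ≤ n := Nat.cast_le.mpr hmn
      have := hu.1
      linarith
    · intro u; exact zero_le
  have hptw : ∀ u, (Iio x).indicator F u = ⨆ n, (s n).indicator F u := by
    intro u
    by_cases hu : u < x
    · obtain ⟨n, hn⟩ := exists_nat_gt (x - u)
      have hun : u ∈ s n := ⟨by push_cast; linarith, hu⟩
      have hu' : u ∈ Iio x := mem_Iio.mpr hu
      refine le_antisymm ?_ ?_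
      · rw [Set.indicator_of_mem hu']
        refine le_trans (le_of_eq ?_) (le_iSup (fun n => (s n).indicator F u) n)
        rw [Set.indicator_of_mem hun]
      · refine iSup_le fun m => ?_
        rw [Set.indicator_of_mem hu']
        exact Set.indicator_le_self _ _ u
    · have hu' : u ∉ Iio x := fun hmem => hu (mem_Iio.mp hmem)
      rw [Set.indicator_of_notMem hu']
      refine le_antisymm zero_le ?_
      refine iSup_le fun m => le_of_eq (Set.indicator_of_notMem ?_ _)
      exact fun hm => hu hm.2
  calc ∫⁻ u in Iio x, F u
      = ∫⁻ u, (Iio x).indicator F u := (lintegral_indicator measurableSet_Iio _).symm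
    _ = ∫⁻ u, ⨆ n, (s n).indicator F u := lintegral_congr hptw
    _ = ⨆ n, ∫⁻ u, (s n).indicator F u :=
        lintegral_iSup (fun n => hFm.indicator measurableSet_Ioo) hmono
    _ = ⨆ n, ∫⁻ u in s n, F u :=
        iSup_congr fun n => lintegral_indicator measurableSet_Ioo _
    _ = ⨆ n : ℕ, ENNReal.ofReal (g x - g (x - (n + 1))) :=
        iSup_congr fun n =>
          lintegral_rd_Ioo hg h0 (by nlinarith [Nat.cast_nonneg (α := ℝ) n])
    _ = ENNReal.ofReal (g x) := by
        have htd : Tendsto (fun n : ℕ => x - (n + 1)) atTop atBot := by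
          apply tendsto_atBot_add_const_left
          rw [tendsto_neg_atBot_iff]
          exact tendsto_atTop_add_const_right _ _ tendsto_natCast_atTop_atTop
        have htend : Tendsto (fun n : ℕ => ENNReal.ofReal (g x - g (x - (n + 1)))) atTop
            (nhds (ENNReal.ofReal (g x - 0))) :=
          (ENNReal.continuous_ofReal.tendsto _).comp
            (tendsto_const_nhds.sub (h0.comp htd))
        have hmono2 : Monotone fun n : ℕ => ENNReal.ofReal (g x - g (x - (n + 1))) := by
          intro m n hmn
          apply ENNReal.ofReal_le_ofReal
          have : (m : ℝ) ≤ n := Nat.cast_le.mpr hmn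
          have := g_mono hg h0 (by linarith : x - (n + 1) ≤ x - (m + 1))
          linarith
        rw [sub_zero] at htend
        exact tendsto_nhds_unique (tendsto_atTop_iSup hmono2) htend

lemma put_lintegral (μ : Measure ℝ) [IsProbabilityMeasure μ]
    (hIic : ∀ u : ℝ, μ (Iic u) = ENNReal.ofReal (rd g u)) (x : ℝ) :
    ∫⁻ w, ENNReal.ofReal (max (x - w) 0) ∂μ = ENNReal.ofReal (g x) := by
  set G : ℝ → ℝ → ENNReal := fun w u =>
    (Iic u).indicator (1 : ℝ → ENNReal) w * (Iio x).indicator 1 u with hG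
  have step1 : ∀ w, ENNReal.ofReal (max (x - w) 0) = ∫⁻ u, G w u ∂volume := by
    intro w
    have h1 : ∀ u, G w u = (Ico w x).indicator (1 : ℝ → ENNReal) u := by
      intro u
      by_cases h1 : w ≤ u <;> by_cases h2 : u < x <;>
        simp [hG, Set.indicator_apply, mem_Ico, mem_Iic, mem_Iio, h1, h2]
    simp_rw [h1]
    rw [lintegral_indicator_one measurableSet_Ico, Real.volume_Ico]
    rcases le_or_gt w x with hwx | hwx
    · congr 1
      exact max_eq_left (by linarith)
    · have hmax : max (x - w) 0 = 0 := max_eq_right (by linarith)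
      rw [hmax, ENNReal.ofReal_zero, ENNReal.ofReal_of_nonpos (by linarith)]
  have hmeas : AEMeasurable (Function.uncurry G) (μ.prod volume) := by
    have : Function.uncurry G = fun p : ℝ × ℝ =>
        ({p : ℝ × ℝ | p.1 ≤ p.2}.indicator (1 : ℝ × ℝ → ENNReal) p) *
        ({p : ℝ × ℝ | p.2 < x}.indicator 1 p) := by
      funext p
      by_cases h1 : p.1 ≤ p.2 <;> by_cases h2 : p.2 < x <;>
        simp [Function.uncurry, hG, Set.indicator_apply, mem_Iic, mem_Iio, h1, h2]
    rw [this]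
    refine Measurable.aemeasurable ?_
    exact ((measurable_const.indicator (measurableSet_le measurable_fst measurable_snd)).mul
      (measurable_const.indicator (measurable_snd measurableSet_Iio)))
  calc ∫⁻ w, ENNReal.ofReal (max (x - w) 0) ∂μ
      = ∫⁻ w, ∫⁻ u, G w u ∂volume ∂μ := lintegral_congr step1
    _ = ∫⁻ u, ∫⁻ w, G w u ∂μ ∂volume := lintegral_lintegral_swap hmeas
    _ = ∫⁻ u, (Iio x).indicator (fun u => μ (Iic u)) u ∂volume := by
        refine lintegral_congr fun u => ?_
        by_cases hu : u ∈ Iio x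
        · rw [Set.indicator_of_mem hu (fun u => μ (Iic u))]
          have h2 : (Iio x).indicator (1 : ℝ → ENNReal) u = 1 := Set.indicator_of_mem hu _
          simp only [hG, h2, mul_one]
          exact lintegral_indicator_one measurableSet_Iic
        · rw [Set.indicator_of_notMem hu (fun u => μ (Iic u))]
          have h2 : (Iio x).indicator (1 : ℝ → ENNReal) u = 0 := Set.indicator_of_notMem hu _
          simp only [hG, h2, mul_zero, lintegral_zero]
    _ = ∫⁻ u in Iio x, μ (Iic u) ∂volume := lintegral_indicator measurableSet_Iio _
    _ = ∫⁻ u in Iio x, ENNReal.ofReal (rd g u) ∂volume :=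
        lintegral_congr fun u => hIic u
    _ = ENNReal.ofReal (g x) := lintegral_rd_Iio hg h0 x

lemma put_integral (μ : Measure ℝ) [IsProbabilityMeasure μ]
    (hIic : ∀ u : ℝ, μ (Iic u) = ENNReal.ofReal (rd g u)) (x : ℝ) :
    Integrable (fun w => max (x - w) 0) μ ∧ ∫ w, max (x - w) 0 ∂μ = g x := by
  have hnn : 0 ≤ᵐ[μ] fun w => max (x - w) 0 :=
    Filter.Eventually.of_forall fun w => le_max_right _ _
  have hlint := put_lintegral hg h0 μ hIic x
  have hInt : Integrable (fun w => max (x - w) 0) μ := by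
    refine ⟨(put_meas x).aestronglyMeasurable, ?_⟩
    rw [hasFiniteIntegral_iff_ofReal hnn, hlint]
    exact ENNReal.ofReal_lt_top
  refine ⟨hInt, ?_⟩
  rw [integral_eq_lintegral_of_nonneg_ae hnn (put_meas x).aestronglyMeasurable, hlint,
    ENNReal.toReal_ofReal (g_nonneg hg h0 x)]

end Boundary


/-! ### Rational CDF facts for `rd` -/

lemma tendsto_ratCast_atTop : Tendsto (fun q : ℚ => (q : ℝ)) atTop atTop := by
  refine tendsto_atTop_atTop.mpr fun b => ?_
  obtain ⟨q, hq⟩ := exists_rat_gt b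
  exact ⟨q, fun r hr => le_trans hq.le (by exact_mod_cast hr)⟩

lemma tendsto_ratCast_atBot : Tendsto (fun q : ℚ => (q : ℝ)) atBot atBot := by
  refine tendsto_atBot_atBot.mpr fun b => ?_
  obtain ⟨q, hq⟩ := exists_rat_lt b
  exact ⟨q, fun r hr => le_trans (by exact_mod_cast hr) hq.le⟩

lemma rd_rat_mono (hg : ConvexOn ℝ univ g) : Monotone (fun q : ℚ => rd g q) :=
  fun _ _ hab => rd_mono hg (by exact_mod_cast hab)

lemma rd_rat_tendsto_atTop (hg : ConvexOn ℝ univ g)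
    (h1 : Tendsto (fun x => derivWithin g (Ioi x) x) atTop (nhds 1)) :
    Tendsto (fun q : ℚ => rd g q) atTop (nhds 1) := by
  have h1' : Tendsto (rd g) atTop (nhds 1) :=
    (tendsto_congr fun x => derivWithin_eq_rd hg x).mp h1
  exact h1'.comp tendsto_ratCast_atTop

lemma rd_rat_tendsto_atBot (hg : ConvexOn ℝ univ g) (h0 : Tendsto g atBot (nhds 0)) :
    Tendsto (fun q : ℚ => rd g q) atBot (nhds 0) :=
  (rd_tendsto_atBot hg h0).comp tendsto_ratCast_atBot

lemma rd_rat_iInf (hg : ConvexOn ℝ univ g) (t : ℚ) :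
    ⨅ r : Ioi t, rd g (r : ℚ) = rd g (t : ℚ) := by
  have hrange : Set.range (fun r : Ioi t => rd g ((r : ℚ) : ℝ))
      = Set.range (fun q : {q' : ℚ // (t : ℝ) < (q' : ℝ)} => rd g ((q : ℚ) : ℝ)) := by
    ext v
    simp only [Set.mem_range, Subtype.exists, mem_Ioi]
    constructor
    · rintro ⟨r, hr, rfl⟩
      exact ⟨r, by exact_mod_cast hr, rfl⟩
    · rintro ⟨r, hr, rfl⟩
      exact ⟨r, by exact_mod_cast hr, rfl⟩
  rw [iInf, hrange, ← iInf]
  exact iInf_rat_gt_rd_eq hg (t : ℝ)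

lemma put_meas' (y : ℝ) : Measurable fun v : ℝ => max (v - y) 0 :=
  (measurable_id.sub measurable_const).max measurable_const

end Stmt6Aux

open Stmt6Aux in
theorem stmt6
    (p : ℝ → Kernel ℝ ℝ)
    (hp_markov : ∀ t, 0 < t → IsMarkovKernel (p t))
    -- Chapman–Kolmogorov for p
    (hCK : ∀ s t, 0 < s → 0 < t → ∀ x, ∀ A : Set ℝ, MeasurableSet A →
      p (t + s) x A = ∫⁻ z, p s z A ∂(p t x))
    -- call prices are finite
    (hint : ∀ t, 0 < t → ∀ x y : ℝ, Integrable (fun z => max (z - y) 0) (p t x))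
    -- h_{t,y}(x) = E (X_t^x - y)_+
    (h : ℝ → ℝ → ℝ → ℝ)
    (hdef : ∀ t y x, h t y x = ∫ z, max (z - y) 0 ∂(p t x)) :
    -- (a) a dual of order 2 exists
    (∃ q : ℝ → Kernel ℝ ℝ,
      (∀ t, 0 < t → IsMarkovKernel (q t)) ∧
      (∀ s t, 0 < s → 0 < t → ∀ y, ∀ A : Set ℝ, MeasurableSet A →
        q (t + s) y A = ∫⁻ w, q t w A ∂(q s y)) ∧
      (∀ t, 0 < t → ∀ x y : ℝ,
        Integrable (fun w => max (x - w) 0) (q t y) ∧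
        (∫ w, max (x - w) 0 ∂(q t y)) = h t y x))
    ↔
    -- (b) convexity plus boundary behaviour
    (∀ t, 0 < t → ∀ y : ℝ,
      ConvexOn ℝ Set.univ (h t y) ∧
      Tendsto (fun x => h t y x) atBot (nhds 0) ∧
      Tendsto (fun x => derivWithin (h t y) (Set.Ioi x) x) atTop (nhds 1)) := by
  constructor
  · rintro ⟨q, hq1, hq2, hq3⟩ t ht y
    haveI := (hq1 t ht).isProbabilityMeasure y
    have hi : ∀ x, Integrable (fun w => max (x - w) 0) (q t y) := fun x => (hq3 t ht x y).1
    have hfun : h t y = fun x => ∫ w, max (x - w) 0 ∂(q t y) :=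
      funext fun x => ((hq3 t ht x y).2).symm
    rw [hfun]
    exact ⟨put_convex _ hi, put_tendsto_atBot _ hi, put_deriv_tendsto _ hi⟩
  · intro hb
    classical
    set F : ℝ → ℝ → ℚ → ℝ := fun t y q => rd (h t y) q with hF
    have hcont : ∀ t, 0 < t → ∀ x : ℝ, Continuous fun y => h t y x := by
      intro t ht x
      haveI := (hp_markov t ht).isProbabilityMeasure x
      have hlip : LipschitzWith 1 fun y => h t y x := by
        refine LipschitzWith.of_dist_le_mul fun y y' => ?_
        rw [Real.dist_eq, Real.dist_eq, hdef t y x, hdef t y' x,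
          ← integral_sub (hint t ht x y) (hint t ht x y')]
        have hb1 : ∀ z, ‖max (z - y) 0 - max (z - y') 0‖ ≤ |y - y'| := by
          intro z
          rw [Real.norm_eq_abs]
          calc |max (z - y) 0 - max (z - y') 0| ≤ |(z - y) - (z - y')| :=
                abs_max_sub_max_le_abs _ _ _
            _ = |y - y'| := by rw [show (z - y) - (z - y') = -(y - y') by ring, abs_neg]
        have hni := norm_integral_le_of_norm_le_const (μ := (p t) x)
          (C := |y - y'|) (Filter.Eventually.of_forall hb1)
        rw [Real.norm_eq_abs] at hni
        simp only [NNReal.coe_one, one_mul]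
        simpa [measure_univ] using hni
      exact hlip.continuous
    have hFmeas : ∀ t, 0 < t → Measurable (F t) := by
      intro t ht
      rw [measurable_pi_iff]
      intro q
      have he : (fun y => F t y q) = fun y =>
          ⨅ r : {r' : ℚ // ((q : ℝ) < (r' : ℝ))}, slope (h t y) (q : ℝ) ((r : ℚ) : ℝ) := by
        funext y
        exact rd_eq_iInf_rat_slope (hb t ht y).1 (q : ℝ)
      rw [he]
      refine Measurable.iInf fun r => ?_
      have he2 : (fun y => slope (h t y) (q : ℝ) ((r : ℚ) : ℝ)) = fun y =>
          (h t y ((r : ℚ) : ℝ) - h t y (q : ℝ)) / (((r : ℚ) : ℝ) - (q : ℝ)) := by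
        funext y; rw [slope_def_field]
      rw [he2]
      exact ((hcont t ht _).measurable.sub (hcont t ht _).measurable).div_const _
    have hstp : ∀ t (ht : 0 < t), ∀ y, IsRatStieltjesPoint (F t) y := by
      intro t ht y
      obtain ⟨hg, h0, h1⟩ := hb t ht y
      exact ⟨rd_rat_mono hg, rd_rat_tendsto_atTop hg h1, rd_rat_tendsto_atBot hg h0,
        fun tq => rd_rat_iInf hg tq⟩
    have hS_eq : ∀ t (ht : 0 < t) (y x : ℝ),
        stieltjesOfMeasurableRat (F t) (hFmeas t ht) y x = rd (h t y) x := by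
      intro t ht y x
      have h1 : stieltjesOfMeasurableRat (F t) (hFmeas t ht) y x
          = ⨅ r : {r' : ℚ // x < (r' : ℝ)}, toRatCDF (F t) y r := by
        rw [stieltjesOfMeasurableRat]
        exact IsMeasurableRatCDF.stieltjesFunctionAux_def _ y x
      rw [h1]
      have h2 : ∀ r : {r' : ℚ // x < (r' : ℝ)},
          toRatCDF (F t) y (r : ℚ) = rd (h t y) ((r : ℚ) : ℝ) := fun r => by
        rw [toRatCDF_of_isRatStieltjesPoint (hstp t ht y)]
      rw [iInf_congr h2]
      exact iInf_rat_gt_rd_eq (hb t ht y).1 x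
    have hIic : ∀ t (ht : 0 < t) (y u : ℝ),
        (stieltjesOfMeasurableRat (F t) (hFmeas t ht) y).measure (Set.Iic u)
          = ENNReal.ofReal (rd (h t y) u) := by
      intro t ht y u
      rw [ProbabilityTheory.measure_stieltjesOfMeasurableRat_Iic, hS_eq t ht y u]
    have hputs : ∀ t (ht : 0 < t) (y x : ℝ),
        Integrable (fun w => max (x - w) 0)
            (stieltjesOfMeasurableRat (F t) (hFmeas t ht) y).measure ∧
          ∫ w, max (x - w) 0 ∂(stieltjesOfMeasurableRat (F t) (hFmeas t ht) y).measure
            = h t y x := by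
      intro t ht y x
      obtain ⟨hg, h0, _⟩ := hb t ht y
      exact put_integral hg h0 _ (hIic t ht y) x
    have hputs_lint : ∀ t (ht : 0 < t) (y x : ℝ),
        ∫⁻ w, ENNReal.ofReal (max (x - w) 0)
            ∂(stieltjesOfMeasurableRat (F t) (hFmeas t ht) y).measure
          = ENNReal.ofReal (h t y x) := by
      intro t ht y x
      obtain ⟨hg, h0, _⟩ := hb t ht y
      exact put_lintegral hg h0 _ (hIic t ht y) x
    refine ⟨fun t => if ht : 0 < t then
        Kernel.mk (fun y => (stieltjesOfMeasurableRat (F t) (hFmeas t ht) y).measure)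
          (ProbabilityTheory.measurable_measure_stieltjesOfMeasurableRat _)
      else Kernel.mk (fun _ => (stieltjesOfMeasurableRat (F 1) (hFmeas 1 one_pos) 0).measure)
          measurable_const, ?_, ?_, ?_⟩
    · intro t ht
      simp only [dif_pos ht]
      exact ⟨fun y => by rw [Kernel.coe_mk]; infer_instance⟩
    · intro s t hs ht y A hA
      have hts : 0 < t + s := add_pos ht hs
      simp only [dif_pos hs, dif_pos ht, dif_pos hts, Kernel.coe_mk]
      set μs := (stieltjesOfMeasurableRat (F s) (hFmeas s hs) y).measure with hμs
      set κ : ℝ → Measure ℝ :=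
        fun w => (stieltjesOfMeasurableRat (F t) (hFmeas t ht) w).measure with hκ
      have hκm : Measurable κ :=
        ProbabilityTheory.measurable_measure_stieltjesOfMeasurableRat _
      set ν := μs.bind κ with hν
      have hlput : ∀ x : ℝ, ∫⁻ w', ENNReal.ofReal (max (x - w') 0) ∂ν
          = ENNReal.ofReal (h (t + s) y x) := by
        intro x
        haveI : IsProbabilityMeasure ((p t) x) := (hp_markov t ht).isProbabilityMeasure x
        have hmeas_put : Measurable fun w' : ℝ => ENNReal.ofReal (max (x - w') 0) :=
          (put_meas x).ennreal_ofReal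
        rw [hν, Measure.lintegral_bind hκm.aemeasurable hmeas_put.aemeasurable]
        have e1 : ∫⁻ w, (∫⁻ w', ENNReal.ofReal (max (x - w') 0) ∂(κ w)) ∂μs
            = ∫⁻ w, ENNReal.ofReal (h t w x) ∂μs :=
          lintegral_congr fun w => hputs_lint t ht w x
        rw [e1]
        have e2 : ∫⁻ w, ENNReal.ofReal (h t w x) ∂μs
            = ∫⁻ w, ∫⁻ z, ENNReal.ofReal (max (z - w) 0) ∂((p t) x) ∂μs := by
          refine lintegral_congr fun w => ?_
          rw [hdef t w x]
          exact MeasureTheory.ofReal_integral_eq_lintegral_ofReal (hint t ht x w)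
            (Filter.Eventually.of_forall fun z => le_max_right _ _)
        rw [e2]
        have e3 : ∫⁻ w, ∫⁻ z, ENNReal.ofReal (max (z - w) 0) ∂((p t) x) ∂μs
            = ∫⁻ z, ∫⁻ w, ENNReal.ofReal (max (z - w) 0) ∂μs ∂((p t) x) := by
          apply MeasureTheory.lintegral_lintegral_swap
          apply Measurable.aemeasurable
          have huc : (Function.uncurry fun w z : ℝ => ENNReal.ofReal (max (z - w) 0))
              = fun pr : ℝ × ℝ => ENNReal.ofReal (max (pr.2 - pr.1) 0) := rfl
          rw [huc]
          exact ((continuous_snd.sub continuous_fst).max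
            continuous_const).measurable.ennreal_ofReal
        rw [e3]
        have e4 : ∫⁻ z, ∫⁻ w, ENNReal.ofReal (max (z - w) 0) ∂μs ∂((p t) x)
            = ∫⁻ z, ENNReal.ofReal (h s y z) ∂((p t) x) :=
          lintegral_congr fun z => hputs_lint s hs y z
        rw [e4]
        have e5 : ∫⁻ z, ENNReal.ofReal (h s y z) ∂((p t) x)
            = ∫⁻ z, ∫⁻ v, ENNReal.ofReal (max (v - y) 0) ∂((p s) z) ∂((p t) x) := by
          refine lintegral_congr fun z => ?_
          haveI : IsProbabilityMeasure ((p s) z) := (hp_markov s hs).isProbabilityMeasure z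
          rw [hdef s y z]
          exact MeasureTheory.ofReal_integral_eq_lintegral_ofReal (hint s hs z y)
            (Filter.Eventually.of_forall fun v => le_max_right _ _)
        rw [e5]
        have hpbind : (p (t + s)) x = ((p t) x).bind (fun z => (p s) z) := by
          refine Measure.ext fun B hB => ?_
          rw [Measure.bind_apply hB (p s).measurable.aemeasurable]
          exact hCK s t hs ht x B hB
        have e6 : ∫⁻ z, ∫⁻ v, ENNReal.ofReal (max (v - y) 0) ∂((p s) z) ∂((p t) x)
            = ∫⁻ v, ENNReal.ofReal (max (v - y) 0) ∂((p (t + s)) x) := by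
          rw [hpbind, Measure.lintegral_bind (p s).measurable.aemeasurable]
          exact (put_meas' y).ennreal_ofReal.aemeasurable
        rw [e6]
        haveI : IsProbabilityMeasure ((p (t + s)) x) :=
          (hp_markov _ hts).isProbabilityMeasure x
        rw [hdef (t + s) y x]
        exact (MeasureTheory.ofReal_integral_eq_lintegral_ofReal (hint (t + s) hts x y)
          (Filter.Eventually.of_forall fun v => le_max_right _ _)).symm
      haveI : IsProbabilityMeasure ν := by
        constructor
        rw [hν, Measure.bind_apply MeasurableSet.univ hκm.aemeasurable]
        have : ∀ w, κ w Set.univ = 1 := fun w => measure_univ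
        simp only [this]
        simp
      have hν_int : ∀ x : ℝ, Integrable (fun w => max (x - w) 0) ν := by
        intro x
        have hnn : (0 : ℝ → ℝ) ≤ᵐ[ν] fun w => max (x - w) 0 :=
          Filter.Eventually.of_forall fun w => le_max_right _ _
        refine ⟨(put_meas x).aestronglyMeasurable, ?_⟩
        rw [hasFiniteIntegral_iff_ofReal hnn, hlput x]
        exact ENNReal.ofReal_lt_top
      have hν_put : ∀ x : ℝ, ∫ w, max (x - w) 0 ∂ν = h (t + s) y x := by
        intro x
        have hnn : (0 : ℝ → ℝ) ≤ᵐ[ν] fun w => max (x - w) 0 :=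
          Filter.Eventually.of_forall fun w => le_max_right _ _
        rw [MeasureTheory.integral_eq_lintegral_of_nonneg_ae hnn
          (put_meas x).aestronglyMeasurable, hlput x]
        exact ENNReal.toReal_ofReal (g_nonneg (hb (t + s) hts y).1 (hb (t + s) hts y).2.1 x)
      have hμν : (stieltjesOfMeasurableRat (F (t + s)) (hFmeas (t + s) hts) y).measure = ν := by
        apply put_unique _ _ (fun x => (hputs (t + s) hts y x).1) hν_int
        intro x
        rw [(hputs (t + s) hts y x).2, hν_put x]
      calc (stieltjesOfMeasurableRat (F (t + s)) (hFmeas (t + s) hts) y).measure A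
          = ν A := by rw [hμν]
        _ = ∫⁻ w, κ w A ∂μs := by rw [hν, Measure.bind_apply hA hκm.aemeasurable]
    · intro t ht x y
      simp only [dif_pos ht, Kernel.coe_mk]
      exact hputs t ht y x
end
end

section
/- Let k ∈ (0,1). Let (p_t)_{t>0} be a family of Markov kernels on ℝ satisfying the Chapman–Kolmogorov equations such that for each t > 0 the kernel p_t has a bounded jointly measurable density ρ_t(x,z) with respect to Lebesgue measure: p_t(x,dz) = ρ_t(x,z) dz. Let (q_t)_{t>0} be a family of Markov kernels on ℝ such that for all t > 0 and x,y ∈ ℝ, ∫_ℝ f_k(x,w) q_t(y,dw) = ∫_ℝ f_k(z,y) ρ_t(x,z) dz, both sides being finite. Then (q_t) satisfies the Chapman–Kolmogorov equations: q_{t+s}(y,A) = ∫_ℝ q_t(w,A) q_s(y,dw) for all s,t > 0, y ∈ ℝ and Borel A; i.e. the order-k dual family is itself Markov. -/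
open MeasureTheory ProbabilityTheory

/-- The duality function of order `k ∈ (0,1)`: `f_k(x,y) = (x-y)^{k-1}` for `x > y`
and `0` for `x ≤ y`. -/
noncomputable def fdual0 (k : ℝ) (x y : ℝ) : ℝ :=
  if y < x then (x - y) ^ (k - 1) else 0

section Aux
open Set ENNReal

lemma fdual0_nonneg (k x y : ℝ) : 0 ≤ fdual0 k x y := by
  unfold fdual0; split
  · exact Real.rpow_nonneg (by linarith) _
  · exact le_refl 0

lemma fdual0_of_le (k : ℝ) {x y : ℝ} (h : x ≤ y) : fdual0 k x y = 0 :=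
  if_neg (not_lt.mpr h)

lemma measurable_fdual0 (k : ℝ) : Measurable (fun p : ℝ × ℝ => fdual0 k p.1 p.2) := by
  unfold fdual0
  have h1 : Measurable (fun p : ℝ × ℝ => (p.1 - p.2) ^ (k-1)) := by measurability
  exact Measurable.ite (measurableSet_lt measurable_snd measurable_fst) h1 measurable_const

/-- scaling of `fdual0` in the first slot -/
lemma fdual0_scale_fst (k : ℝ) {a : ℝ} (ha : 0 < a) (w u : ℝ) :
    fdual0 k (w + a * u) w = a ^ (k - 1) * fdual0 k u 0 := by
  by_cases hu : 0 < u
  · have h1 : w < w + a * u := lt_add_of_pos_right w (mul_pos ha hu)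
    unfold fdual0
    rw [if_pos h1, if_pos hu, add_sub_cancel_left, sub_zero,
      Real.mul_rpow ha.le hu.le]
  · have h1 : ¬ w < w + a * u := by
      have : a * u ≤ 0 := mul_nonpos_of_nonneg_of_nonpos ha.le (not_lt.mp hu)
      simp only [not_lt]; linarith
    unfold fdual0
    rw [if_neg h1, if_neg hu, mul_zero]

/-- scaling of `fdual0` in the second slot -/
lemma fdual0_scale_snd (k : ℝ) {a : ℝ} (ha : 0 < a) (w u : ℝ) :
    fdual0 k (w + a) (w + a * u) = a ^ (k - 1) * fdual0 k 1 u := by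
  by_cases hu : u < 1
  · have h1 : w + a * u < w + a := by nlinarith
    have h2 : 0 < 1 - u := by linarith
    unfold fdual0
    rw [if_pos h1, if_pos hu]
    have : w + a - (w + a * u) = a * (1 - u) := by ring
    rw [this, Real.mul_rpow ha.le h2.le]
  · have h1 : ¬ w + a * u < w + a := by
      simp only [not_lt] at hu ⊢; nlinarith
    unfold fdual0
    rw [if_neg h1, if_neg hu, mul_zero]

/-- The (Beta function) constant. -/
noncomputable def betaC (k : ℝ) : ℝ≥0∞ :=
  ∫⁻ x, ENNReal.ofReal (fdual0 k x 0) * ENNReal.ofReal (fdual0 (1-k) 1 x)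

lemma beta_indep {k : ℝ} (hk0 : 0 < k) (hk1 : k < 1) {w t : ℝ} (hwt : w < t) :
    ∫⁻ x, ENNReal.ofReal (fdual0 k x w) * ENNReal.ofReal (fdual0 (1-k) t x) = betaC k := by
  set a := t - w with ha_def
  have ha : 0 < a := sub_pos.2 hwt
  have hta : t = w + a := by rw [ha_def]; ring
  set F : ℝ → ℝ≥0∞ := fun x =>
    ENNReal.ofReal (fdual0 k x w) * ENNReal.ofReal (fdual0 (1-k) t x) with hF_def
  have hFm : Measurable F := by
    apply Measurable.fun_mul
    · exact ((measurable_fdual0 k).comp (measurable_id.prodMk measurable_const)).ennreal_ofReal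
    · exact ((measurable_fdual0 (1-k)).comp (measurable_const.prodMk measurable_id)).ennreal_ofReal
  have harpow : ∀ r : ℝ, (0:ℝ) ≤ a ^ r := fun r => Real.rpow_nonneg ha.le r
  calc ∫⁻ x, F x
      = ∫⁻ x, F (w + x) := (lintegral_add_left_eq_self F w).symm
    _ = ∫⁻ x, F (w + x) ∂(ENNReal.ofReal |a| • Measure.map (a * ·) volume) := by
        rw [Real.smul_map_volume_mul_left ha.ne']
    _ = ENNReal.ofReal a * ∫⁻ x, F (w + x) ∂(Measure.map (a * ·) volume) := by
        rw [lintegral_smul_measure, abs_of_pos ha, smul_eq_mul]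
    _ = ENNReal.ofReal a * ∫⁻ u, F (w + a * u) := by
        have hm : Measurable fun x : ℝ => F (w + x) := hFm.comp (measurable_const_add w)
        rw [lintegral_map hm (measurable_const_mul a)]
    _ = ∫⁻ u, ENNReal.ofReal a * F (w + a * u) :=
        (lintegral_const_mul' _ _ ofReal_ne_top).symm
    _ = ∫⁻ u, ENNReal.ofReal (fdual0 k u 0) * ENNReal.ofReal (fdual0 (1-k) 1 u) := by
        refine lintegral_congr fun u => ?_
        rw [hF_def]
        simp only
        rw [fdual0_scale_fst k ha w u, hta, fdual0_scale_snd (1-k) ha w u,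
          ENNReal.ofReal_mul (harpow _), ENNReal.ofReal_mul (harpow _)]
        have hone : ENNReal.ofReal a * (ENNReal.ofReal (a ^ (k-1)) * ENNReal.ofReal (a ^ (1-k-1)))
            = 1 := by
          have h2 : a ^ (k-1) * a ^ (1-k-1) = a ^ (-1:ℝ) := by
            rw [← Real.rpow_add ha]; congr 1; ring
          rw [← ENNReal.ofReal_mul (harpow (k-1)), ← ENNReal.ofReal_mul ha.le, h2,
            Real.rpow_neg_one, mul_inv_cancel₀ ha.ne', ENNReal.ofReal_one]
        calc ENNReal.ofReal a * (ENNReal.ofReal (a ^ (k-1)) * ENNReal.ofReal (fdual0 k u 0) *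
              (ENNReal.ofReal (a ^ (1-k-1)) * ENNReal.ofReal (fdual0 (1-k) 1 u)))
            = (ENNReal.ofReal a * (ENNReal.ofReal (a ^ (k-1)) * ENNReal.ofReal (a ^ (1-k-1)))) *
              (ENNReal.ofReal (fdual0 k u 0) * ENNReal.ofReal (fdual0 (1-k) 1 u)) := by ring
          _ = _ := by rw [hone, one_mul]
    _ = betaC k := rfl

lemma betaC_meas (k : ℝ) : Measurable (fun x =>
    ENNReal.ofReal (fdual0 k x 0) * ENNReal.ofReal (fdual0 (1-k) 1 x)) := by
  apply Measurable.fun_mul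
  · exact ((measurable_fdual0 k).comp (measurable_id.prodMk measurable_const)).ennreal_ofReal
  · exact ((measurable_fdual0 (1-k)).comp (measurable_const.prodMk measurable_id)).ennreal_ofReal

lemma betaC_pos {k : ℝ} (hk0 : 0 < k) (hk1 : k < 1) : 0 < betaC k := by
  rw [betaC, lintegral_pos_iff_support (betaC_meas k)]
  have hsub : Ioo (0:ℝ) 1 ⊆ Function.support (fun x =>
      ENNReal.ofReal (fdual0 k x 0) * ENNReal.ofReal (fdual0 (1-k) 1 x)) := by
    intro x hx
    have h1 : fdual0 k x 0 > 0 := by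
      unfold fdual0; rw [if_pos hx.1]; exact Real.rpow_pos_of_pos (by simpa using hx.1) _
    have h2 : fdual0 (1-k) 1 x > 0 := by
      unfold fdual0; rw [if_pos hx.2]; exact Real.rpow_pos_of_pos (by linarith [hx.2]) _
    simp only [Function.mem_support]
    exact mul_ne_zero (by simpa [ENNReal.ofReal_pos] using h1.le.lt_of_ne' h1.ne')
      (by simp [ENNReal.ofReal_pos, h2])
  calc (0:ℝ≥0∞) < volume (Ioo (0:ℝ) 1) := by simp
    _ ≤ _ := measure_mono hsub

lemma measurable_rpow_const' (c : ℝ) : Measurable fun x : ℝ => x ^ c := by measurability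

lemma measurable_one_sub_rpow (c : ℝ) : Measurable fun x : ℝ => (1-x) ^ c := by
  have h : Measurable fun x : ℝ => (1:ℝ) - x := measurable_const.sub measurable_id
  exact (measurable_rpow_const' c).comp h

lemma lint_ofReal_ne_top {s : Set ℝ} {g : ℝ → ℝ} (hg : IntegrableOn g s)
    (h0 : ∀ᵐ x ∂(volume.restrict s), 0 ≤ g x) :
    ∫⁻ x in s, ENNReal.ofReal (g x) ≠ ∞ := by
  rw [← ofReal_integral_eq_lintegral_ofReal hg h0]; exact ofReal_ne_top

lemma betaC_ne_top {k : ℝ} (hk0 : 0 < k) (hk1 : k < 1) : betaC k ≠ ∞ := by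
  set f : ℝ → ℝ≥0∞ := fun x =>
    ENNReal.ofReal (fdual0 k x 0) * ENNReal.ofReal (fdual0 (1-k) 1 x) with hf_def
  have hind : ∀ x, f x = (Ioo (0:ℝ) 1).indicator f x := by
    intro x
    by_cases hx : x ∈ Ioo (0:ℝ) 1
    · rw [indicator_of_mem hx]
    · rw [indicator_of_notMem hx]
      simp only [mem_Ioo, not_and_or, not_lt] at hx
      rcases hx with hx | hx
      · have : fdual0 k x 0 = 0 := fdual0_of_le k hx
        simp [hf_def, this]
      · have : fdual0 (1-k) 1 x = 0 := fdual0_of_le (1-k) hx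
        simp [hf_def, this]
    -- bounds
  have key : ∫⁻ x in Ioo (0:ℝ) 1, f x < ∞ := by
    rw [← Ioc_union_Ioo_eq_Ioo (by norm_num : (0:ℝ) ≤ 2⁻¹) (by norm_num : (2⁻¹:ℝ) < 1)]
    refine lt_of_le_of_lt (lintegral_union_le _ _ _) ?_
    have hA : ∫⁻ x in Ioc (0:ℝ) 2⁻¹, f x < ∞ := by
      have hle : ∀ x ∈ Ioc (0:ℝ) 2⁻¹, f x ≤
          ENNReal.ofReal (2 ^ k) * ENNReal.ofReal (x ^ (k-1)) := by
        intro x hx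
        have hx0 : (0:ℝ) < x := hx.1
        have hfd1 : fdual0 k x 0 = x ^ (k-1) := by
          unfold fdual0; rw [if_pos hx0, sub_zero]
        have hfd2 : fdual0 (1-k) 1 x ≤ 2 ^ k := by
          unfold fdual0
          rw [if_pos (by linarith [hx.2] : x < 1)]
          have h1 : (1:ℝ) - x ≥ 2⁻¹ := by linarith [hx.2]
          calc (1 - x) ^ (1 - k - 1) ≤ (2⁻¹:ℝ) ^ (1 - k - 1) :=
                Real.rpow_le_rpow_of_nonpos (by norm_num) h1 (by linarith)
            _ = 2 ^ k := by
                rw [show (1:ℝ) - k - 1 = -k by ring, Real.inv_rpow (by norm_num),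
                  ← Real.rpow_neg (by norm_num), neg_neg]
        calc f x = ENNReal.ofReal (fdual0 (1-k) 1 x) * ENNReal.ofReal (x ^ (k-1)) := by
              rw [hf_def]; simp only; rw [hfd1, mul_comm]
          _ ≤ _ := by
              exact mul_le_mul_left (ENNReal.ofReal_le_ofReal hfd2) _
      calc ∫⁻ x in Ioc (0:ℝ) 2⁻¹, f x
          ≤ ∫⁻ x in Ioc (0:ℝ) 2⁻¹, ENNReal.ofReal (2 ^ k) * ENNReal.ofReal (x ^ (k-1)) := by
            have hm : Measurable fun x : ℝ => x ^ (k-1) := measurable_rpow_const' _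
            exact setLIntegral_mono (hm.ennreal_ofReal.const_mul _) hle
        _ = ENNReal.ofReal (2 ^ k) * ∫⁻ x in Ioc (0:ℝ) 2⁻¹, ENNReal.ofReal (x ^ (k-1)) :=
            lintegral_const_mul' _ _ ofReal_ne_top
        _ < ∞ := by
            refine ENNReal.mul_lt_top ofReal_ne_top.lt_top ?_
            refine (lint_ofReal_ne_top ?_ ?_).lt_top
            · exact (intervalIntegrable_iff_integrableOn_Ioc_of_le
                (by norm_num : (0:ℝ) ≤ 2⁻¹)).mp
                (intervalIntegral.intervalIntegrable_rpow' (by linarith))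
            · filter_upwards [ae_restrict_mem measurableSet_Ioc] with x hx using
                Real.rpow_nonneg hx.1.le _
    have hB : ∫⁻ x in Ioo (2⁻¹:ℝ) 1, f x < ∞ := by
      have hle : ∀ x ∈ Ioo (2⁻¹:ℝ) 1, f x ≤
          ENNReal.ofReal (2 ^ (1-k)) * ENNReal.ofReal ((1-x) ^ (-k)) := by
        intro x hx
        have hfd2 : fdual0 (1-k) 1 x = (1-x) ^ (-k) := by
          unfold fdual0
          rw [if_pos hx.2, show (1:ℝ) - k - 1 = -k by ring]
        have hfd1 : fdual0 k x 0 ≤ 2 ^ (1-k) := by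
          unfold fdual0
          rw [if_pos (by linarith [hx.1] : (0:ℝ) < x), sub_zero]
          calc x ^ (k - 1) ≤ (2⁻¹:ℝ) ^ (k - 1) :=
                Real.rpow_le_rpow_of_nonpos (by norm_num) hx.1.le (by linarith)
            _ = 2 ^ (1-k) := by
                rw [Real.inv_rpow (by norm_num), ← Real.rpow_neg (by norm_num)]
                norm_num
        calc f x = ENNReal.ofReal (fdual0 k x 0) * ENNReal.ofReal ((1-x) ^ (-k)) := by
              rw [hf_def]; simp only; rw [hfd2]
          _ ≤ _ := mul_le_mul_left (ENNReal.ofReal_le_ofReal hfd1) _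
      calc ∫⁻ x in Ioo (2⁻¹:ℝ) 1, f x
          ≤ ∫⁻ x in Ioo (2⁻¹:ℝ) 1, ENNReal.ofReal (2 ^ (1-k)) * ENNReal.ofReal ((1-x) ^ (-k)) := by
            have hm : Measurable fun x : ℝ => (1-x) ^ (-k) := measurable_one_sub_rpow _
            exact setLIntegral_mono (hm.ennreal_ofReal.const_mul _) hle
        _ = ENNReal.ofReal (2 ^ (1-k)) * ∫⁻ x in Ioo (2⁻¹:ℝ) 1, ENNReal.ofReal ((1-x) ^ (-k)) :=
            lintegral_const_mul' _ _ ofReal_ne_top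
        _ < ∞ := by
            refine ENNReal.mul_lt_top ofReal_ne_top.lt_top ?_
            refine (lint_ofReal_ne_top ?_ ?_).lt_top
            · have h1 : IntervalIntegrable (fun u : ℝ => u ^ (-k)) volume 0 2⁻¹ :=
                intervalIntegral.intervalIntegrable_rpow' (by linarith)
              have h2 := h1.comp_sub_left 1
              rw [show (1:ℝ) - 0 = 1 by ring, show (1:ℝ) - 2⁻¹ = 2⁻¹ by norm_num] at h2
              have h3 : IntervalIntegrable (fun x : ℝ => (1-x) ^ (-k)) volume 2⁻¹ 1 := h2.symm
              have := (intervalIntegrable_iff_integrableOn_Ioc_of_le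
                (by norm_num : (2⁻¹:ℝ) ≤ 1)).mp h3
              exact this.mono_set Ioo_subset_Ioc_self
            · filter_upwards [ae_restrict_mem measurableSet_Ioo] with x hx using
                Real.rpow_nonneg (by linarith [hx.2]) _
    exact ENNReal.add_lt_top.mpr ⟨hA, hB⟩
  have : betaC k = ∫⁻ x in Ioo (0:ℝ) 1, f x := by
    rw [betaC, ← lintegral_indicator measurableSet_Ioo]
    exact lintegral_congr hind
  rw [this]; exact key.ne

lemma key_transform {k : ℝ} (hk0 : 0 < k) (hk1 : k < 1) (μ : Measure ℝ) [IsFiniteMeasure μ]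
    (t : ℝ) :
    ∫⁻ x, (∫⁻ w, ENNReal.ofReal (fdual0 k x w) ∂μ) * ENNReal.ofReal (fdual0 (1-k) t x)
      = betaC k * μ (Iio t) := by
  have hswap : ∫⁻ x, ∫⁻ w, ENNReal.ofReal (fdual0 k x w) * ENNReal.ofReal (fdual0 (1-k) t x) ∂μ
      = ∫⁻ w, ∫⁻ x, ENNReal.ofReal (fdual0 k x w) * ENNReal.ofReal (fdual0 (1-k) t x) ∂volume ∂μ := by
    apply lintegral_lintegral_swap
    apply Measurable.aemeasurable
    apply Measurable.fun_mul
    · exact ((measurable_fdual0 k).comp (measurable_fst.prodMk measurable_snd)).ennreal_ofReal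
    · exact ((measurable_fdual0 (1-k)).comp
        (measurable_const.prodMk measurable_fst)).ennreal_ofReal
  calc ∫⁻ x, (∫⁻ w, ENNReal.ofReal (fdual0 k x w) ∂μ) * ENNReal.ofReal (fdual0 (1-k) t x)
      = ∫⁻ x, ∫⁻ w, ENNReal.ofReal (fdual0 k x w) * ENNReal.ofReal (fdual0 (1-k) t x) ∂μ :=
        lintegral_congr fun x => (lintegral_mul_const' _ _ ofReal_ne_top).symm
    _ = ∫⁻ w, ∫⁻ x, ENNReal.ofReal (fdual0 k x w) * ENNReal.ofReal (fdual0 (1-k) t x) ∂volume ∂μ :=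
        hswap
    _ = ∫⁻ w, (Iio t).indicator (fun _ => betaC k) w ∂μ := by
        refine lintegral_congr fun w => ?_
        by_cases hw : w < t
        · rw [indicator_of_mem (by exact hw : w ∈ Iio t)]
          exact beta_indep hk0 hk1 hw
        · rw [indicator_of_notMem (by simpa using hw)]
          have hz : ∀ x : ℝ, ENNReal.ofReal (fdual0 k x w) * ENNReal.ofReal (fdual0 (1-k) t x)
              = 0 := by
            intro x
            rcases le_or_gt x w with hxw | hwx
            · rw [fdual0_of_le k hxw, ENNReal.ofReal_zero, zero_mul]
            · have : t ≤ x := le_of_lt (lt_of_le_of_lt (not_lt.mp hw) hwx)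
              rw [fdual0_of_le (1-k) this, ENNReal.ofReal_zero, mul_zero]
          calc ∫⁻ x, ENNReal.ofReal (fdual0 k x w) * ENNReal.ofReal (fdual0 (1-k) t x)
              = ∫⁻ _ : ℝ, (0:ℝ≥0∞) := lintegral_congr hz
            _ = 0 := lintegral_zero
    _ = betaC k * μ (Iio t) := by
        rw [lintegral_indicator measurableSet_Iio, setLIntegral_const]

lemma measure_eq_of_fdual0 {k : ℝ} (hk0 : 0 < k) (hk1 : k < 1) (μ ν : Measure ℝ)
    [IsProbabilityMeasure μ] [IsProbabilityMeasure ν]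
    (h : ∀ x, ∫⁻ w, ENNReal.ofReal (fdual0 k x w) ∂μ
      = ∫⁻ w, ENNReal.ofReal (fdual0 k x w) ∂ν) : μ = ν := by
  refine ext_of_generate_finite (Set.range Iio) ?_ isPiSystem_Iio ?_ (by simp)
  · exact (BorelSpace.measurable_eq (α := ℝ)).trans (borel_eq_generateFrom_Iio ℝ)
  · rintro s ⟨a, rfl⟩
    have h1 := key_transform hk0 hk1 μ a
    have h2 := key_transform hk0 hk1 ν a
    have h3 : betaC k * μ (Iio a) = betaC k * ν (Iio a) := by
      rw [← h1, ← h2]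
      exact lintegral_congr fun x => by rw [h x]
    exact (ENNReal.mul_right_inj (betaC_pos hk0 hk1).ne' (betaC_ne_top hk0 hk1)).mp h3

end Aux

open Set ENNReal in
theorem stmt8 (k : ℝ) (hk0 : 0 < k) (hk1 : k < 1)
    (p q : ℝ → Kernel ℝ ℝ)
    (hp_markov : ∀ t, 0 < t → IsMarkovKernel (p t))
    (hq_markov : ∀ t, 0 < t → IsMarkovKernel (q t))
    -- Chapman–Kolmogorov for p
    (hCK : ∀ s t, 0 < s → 0 < t → ∀ x, ∀ A : Set ℝ, MeasurableSet A →
      p (t + s) x A = ∫⁻ z, p s z A ∂(p t x))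
    -- bounded jointly measurable densities ρ_t of p_t with respect to Lebesgue measure
    (ρ : ℝ → ℝ → ℝ → ℝ)
    (hρ_meas : ∀ t, 0 < t → Measurable (fun xz : ℝ × ℝ => ρ t xz.1 xz.2))
    (hρ_nonneg : ∀ t, 0 < t → ∀ x z, 0 ≤ ρ t x z)
    (hρ_bdd : ∀ t, 0 < t → ∃ C : ℝ, ∀ x z, ρ t x z ≤ C)
    (hdens : ∀ t, 0 < t → ∀ x : ℝ,
      p t x = volume.withDensity (fun z => ENNReal.ofReal (ρ t x z)))
    -- finiteness of both sides of the duality relation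
    (hint_q : ∀ t, 0 < t → ∀ x y : ℝ, Integrable (fun w => fdual0 k x w) (q t y))
    (hint_p : ∀ t, 0 < t → ∀ x y : ℝ, Integrable (fun z => fdual0 k z y * ρ t x z) volume)
    -- order-k duality: ∫ f_k(x,w) q_t(y,dw) = ∫ f_k(z,y) ρ_t(x,z) dz
    (hdual : ∀ t, 0 < t → ∀ x y : ℝ,
      (∫ w, fdual0 k x w ∂(q t y)) = ∫ z, fdual0 k z y * ρ t x z) :
    -- then q satisfies the Chapman–Kolmogorov equations
    ∀ s t, 0 < s → 0 < t → ∀ y, ∀ A : Set ℝ, MeasurableSet A →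
      q (t + s) y A = ∫⁻ w, q t w A ∂(q s y) := by
  intro s t hs ht y A hA
  have hts : 0 < t + s := by linarith
  haveI hm_s := hq_markov s hs
  haveI hm_t := hq_markov t ht
  haveI hm_ts := hq_markov (t + s) hts
  haveI hpm_s := hp_markov s hs
  haveI hpm_t := hp_markov t ht
  haveI hpm_ts := hp_markov (t + s) hts
  have hqt_meas : Measurable (fun w => (q t) w) := (q t).measurable
  set ν : Measure ℝ := (q s y).bind (fun w => (q t) w) with hν_def
  haveI hν_prob : IsProbabilityMeasure ν := by
    constructor
    rw [hν_def, Measure.bind_apply MeasurableSet.univ hqt_meas.aemeasurable]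
    simp [measure_univ]
  suffices hmain : q (t + s) y = ν by
    rw [show (q (t+s)) y A = (q (t+s) y) A from rfl, hmain, hν_def,
      Measure.bind_apply hA hqt_meas.aemeasurable]
  refine measure_eq_of_fdual0 hk0 hk1 _ _ (fun x => ?_)
  -- some measurability facts
  have mρ : ∀ t', 0 < t' → ∀ x' : ℝ, Measurable fun z => ENNReal.ofReal (ρ t' x' z) :=
    fun t' ht' x' => ((hρ_meas t' ht').comp (measurable_const.prodMk measurable_id)).ennreal_ofReal
  have mρ' : ∀ t', 0 < t' → ∀ u : ℝ, Measurable fun z => ENNReal.ofReal (ρ t' z u) :=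
    fun t' ht' u => ((hρ_meas t' ht').comp (measurable_id.prodMk measurable_const)).ennreal_ofReal
  have mfd : ∀ x' : ℝ, Measurable fun w => ENNReal.ofReal (fdual0 k x' w) :=
    fun x' => ((measurable_fdual0 k).comp (measurable_const.prodMk measurable_id)).ennreal_ofReal
  have mfd' : ∀ y' : ℝ, Measurable fun u => ENNReal.ofReal (fdual0 k u y') :=
    fun y' => ((measurable_fdual0 k).comp (measurable_id.prodMk measurable_const)).ennreal_ofReal
  -- LHS
  have hL : ∫⁻ w, ENNReal.ofReal (fdual0 k x w) ∂(q (t+s) y)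
      = ∫⁻ u, ENNReal.ofReal (fdual0 k u y * ρ (t+s) x u) := by
    rw [← ofReal_integral_eq_lintegral_ofReal (hint_q (t+s) hts x y)
        (Filter.Eventually.of_forall fun w => fdual0_nonneg k x w),
      hdual (t+s) hts x y,
      ofReal_integral_eq_lintegral_ofReal (hint_p (t+s) hts x y)
        (Filter.Eventually.of_forall fun u =>
          mul_nonneg (fdual0_nonneg k u y) (hρ_nonneg (t+s) hts x u))]
  -- the density of the convolved kernel
  set g : ℝ → ℝ≥0∞ := fun u => ∫⁻ z, ENNReal.ofReal (ρ s z u) * ENNReal.ofReal (ρ t x z)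
    with hg_def
  have hg_meas : Measurable g := by
    have := Measurable.lintegral_prod_right'
      (f := fun p : ℝ × ℝ => ENNReal.ofReal (ρ s p.2 p.1) * ENNReal.ofReal (ρ t x p.2))
      (ν := volume)
      ((((hρ_meas s hs).comp (measurable_snd.prodMk measurable_fst)).ennreal_ofReal).mul
        (((hρ_meas t ht).comp (measurable_const.prodMk measurable_snd)).ennreal_ofReal))
    exact this
  have hae : g =ᵐ[volume] fun u => ENNReal.ofReal (ρ (t+s) x u) := by
    refine ae_eq_of_forall_setLIntegral_eq_of_sigmaFinite hg_meas (mρ (t+s) hts x) ?_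
    intro B hB _
    have step1 : ∫⁻ u in B, ENNReal.ofReal (ρ (t+s) x u) = (p (t+s)) x B := by
      rw [hdens (t+s) hts x, withDensity_apply _ hB]
    have step2 : (p (t+s)) x B = ∫⁻ z, (p s) z B ∂((p t) x) := hCK s t hs ht x B hB
    have step3 : ∫⁻ z, (p s) z B ∂((p t) x)
        = ∫⁻ z, (∫⁻ u in B, ENNReal.ofReal (ρ s z u)) ∂((p t) x) :=
      lintegral_congr fun z => by rw [hdens s hs z, withDensity_apply _ hB]
    have minner : Measurable fun z => ∫⁻ u in B, ENNReal.ofReal (ρ s z u) := by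
      have := Measurable.lintegral_prod_right'
        (f := fun p : ℝ × ℝ => ENNReal.ofReal (ρ s p.1 p.2))
        (ν := volume.restrict B)
        (((hρ_meas s hs).comp (measurable_fst.prodMk measurable_snd)).ennreal_ofReal)
      exact this
    have step4 : ∫⁻ z, (∫⁻ u in B, ENNReal.ofReal (ρ s z u)) ∂((p t) x)
        = ∫⁻ z, ENNReal.ofReal (ρ t x z) * ∫⁻ u in B, ENNReal.ofReal (ρ s z u) := by
      rw [hdens t ht x, lintegral_withDensity_eq_lintegral_mul volume (mρ t ht x) minner]
      rfl
    have step5 : ∫⁻ z, ENNReal.ofReal (ρ t x z) * ∫⁻ u in B, ENNReal.ofReal (ρ s z u)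
        = ∫⁻ z, ∫⁻ u in B, ENNReal.ofReal (ρ t x z) * ENNReal.ofReal (ρ s z u) :=
      lintegral_congr fun z => (lintegral_const_mul' _ _ ofReal_ne_top).symm
    have step6 : ∫⁻ z, ∫⁻ u in B, ENNReal.ofReal (ρ t x z) * ENNReal.ofReal (ρ s z u)
        = ∫⁻ u in B, ∫⁻ z, ENNReal.ofReal (ρ t x z) * ENNReal.ofReal (ρ s z u) := by
      apply lintegral_lintegral_swap
      apply Measurable.aemeasurable
      exact (((hρ_meas t ht).comp (measurable_const.prodMk measurable_fst)).ennreal_ofReal).mul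
        (((hρ_meas s hs).comp (measurable_fst.prodMk measurable_snd)).ennreal_ofReal)
    have step7 : ∫⁻ u in B, ∫⁻ z, ENNReal.ofReal (ρ t x z) * ENNReal.ofReal (ρ s z u)
        = ∫⁻ u in B, g u :=
      lintegral_congr fun u => lintegral_congr fun z => mul_comm _ _
    rw [step1, step2, step3, step4, step5, step6, step7]
  -- RHS chain
  calc ∫⁻ w, ENNReal.ofReal (fdual0 k x w) ∂(q (t+s) y)
      = ∫⁻ u, ENNReal.ofReal (fdual0 k u y * ρ (t+s) x u) := hL
    _ = ∫⁻ u, ENNReal.ofReal (fdual0 k u y) * ENNReal.ofReal (ρ (t+s) x u) :=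
        lintegral_congr fun u => ENNReal.ofReal_mul (fdual0_nonneg k u y)
    _ = ∫⁻ u, ENNReal.ofReal (fdual0 k u y) * g u := by
        refine lintegral_congr_ae ?_
        filter_upwards [hae] with u hu
        rw [hu]
    _ = ∫⁻ u, ∫⁻ z, ENNReal.ofReal (fdual0 k u y * ρ s z u) * ENNReal.ofReal (ρ t x z) := by
        refine lintegral_congr fun u => ?_
        rw [hg_def]
        simp only
        rw [← lintegral_const_mul' _ _ ofReal_ne_top]
        refine lintegral_congr fun z => ?_
        rw [ENNReal.ofReal_mul (fdual0_nonneg k u y), mul_assoc]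
    _ = ∫⁻ z, ∫⁻ u, ENNReal.ofReal (fdual0 k u y * ρ s z u) * ENNReal.ofReal (ρ t x z) := by
        refine (lintegral_lintegral_swap ?_).symm
        apply Measurable.aemeasurable
        refine Measurable.mul ?_ (((hρ_meas t ht).comp
          (measurable_const.prodMk measurable_fst)).ennreal_ofReal)
        refine Measurable.ennreal_ofReal ?_
        exact ((measurable_fdual0 k).comp (measurable_snd.prodMk measurable_const)).mul
          ((hρ_meas s hs).comp (measurable_fst.prodMk measurable_snd))
    _ = ∫⁻ z, (∫⁻ u, ENNReal.ofReal (fdual0 k u y * ρ s z u)) * ENNReal.ofReal (ρ t x z) :=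
        lintegral_congr fun z => lintegral_mul_const' _ _ ofReal_ne_top
    _ = ∫⁻ z, (∫⁻ w', ENNReal.ofReal (fdual0 k z w') ∂(q s y)) * ENNReal.ofReal (ρ t x z) := by
        refine lintegral_congr fun z => ?_
        congr 1
        rw [← ofReal_integral_eq_lintegral_ofReal (hint_p s hs z y)
            (Filter.Eventually.of_forall fun u =>
              mul_nonneg (fdual0_nonneg k u y) (hρ_nonneg s hs z u)),
          ← hdual s hs z y,
          ofReal_integral_eq_lintegral_ofReal (hint_q s hs z y)
            (Filter.Eventually.of_forall fun w => fdual0_nonneg k z w)]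
    _ = ∫⁻ z, ∫⁻ w', ENNReal.ofReal (fdual0 k z w') * ENNReal.ofReal (ρ t x z) ∂(q s y) :=
        lintegral_congr fun z => (lintegral_mul_const' _ _ ofReal_ne_top).symm
    _ = ∫⁻ w', ∫⁻ z, ENNReal.ofReal (fdual0 k z w') * ENNReal.ofReal (ρ t x z) ∂volume ∂(q s y) := by
        refine (lintegral_lintegral_swap ?_).symm
        apply Measurable.aemeasurable
        exact (((measurable_fdual0 k).comp (measurable_snd.prodMk measurable_fst)).ennreal_ofReal).mul
          (((hρ_meas t ht).comp (measurable_const.prodMk measurable_snd)).ennreal_ofReal)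
    _ = ∫⁻ w', ∫⁻ z, ENNReal.ofReal (fdual0 k z w' * ρ t x z) ∂volume ∂(q s y) :=
        lintegral_congr fun w' => lintegral_congr fun z =>
          (ENNReal.ofReal_mul (fdual0_nonneg k z w')).symm
    _ = ∫⁻ w', ∫⁻ w, ENNReal.ofReal (fdual0 k x w) ∂((q t) w') ∂(q s y) := by
        refine lintegral_congr fun w' => ?_
        rw [← ofReal_integral_eq_lintegral_ofReal (hint_p t ht x w')
            (Filter.Eventually.of_forall fun z =>
              mul_nonneg (fdual0_nonneg k z w') (hρ_nonneg t ht x z)),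
          ← hdual t ht x w',
          ofReal_integral_eq_lintegral_ofReal (hint_q t ht x w')
            (Filter.Eventually.of_forall fun w => fdual0_nonneg k x w)]
    _ = ∫⁻ w, ENNReal.ofReal (fdual0 k x w) ∂ν := by
        rw [hν_def, Measure.lintegral_bind hqt_meas.aemeasurable (mfd x).aemeasurable]
end

section
/- Let k ≥ 2 be an integer, let b : ℝ → ℝ be k times continuously differentiable, and let g : ℝ → ℝ be infinitely differentiable with compact support. Then for every y ∈ ℝ: ∫_y^∞ ((x−y)^{k−2}/(k−2)!) b(x) (−1)^k g^{(k)}(x) dx = −b(y) g′(y) + (k−1) b′(y) g(y) + ∫_y^∞ g(x) (d/dx)^k [ ((x−y)^{k−2}/(k−2)!) b(x) ] dx, where (d/dx)^k is taken with y fixed. -/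
open MeasureTheory Set Filter Topology
open MeasureTheory Set Filter Topology

lemma hcs_iter {g : ℝ → ℝ} (hgs : HasCompactSupport g) (n : ℕ) :
    HasCompactSupport (iteratedDeriv n g) := by
  induction n with
  | zero => simpa using hgs
  | succ n ih => rw [iteratedDeriv_succ]; exact ih.deriv

lemma tendsto_zero_of_hcs {F : ℝ → ℝ} (h : HasCompactSupport F) :
    Tendsto F atTop (𝓝 0) := by
  obtain ⟨R, hR⟩ := h.isCompact.bddAbove
  refine tendsto_const_nhds.congr' ?_
  filter_upwards [eventually_gt_atTop R] with x hx
  exact (image_eq_zero_of_notMem_tsupport (fun hmem => absurd (hR hmem) (not_le.mpr hx))).symm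

lemma ibp_Ioi (f G : ℝ → ℝ) (hfd : Differentiable ℝ f) (hfc : Continuous (deriv f))
    (hG : ContDiff ℝ (⊤ : ℕ∞) G) (hGs : HasCompactSupport G) (y : ℝ) :
    ∫ x in Set.Ioi y, f x * deriv G x
      = -(f y * G y) - ∫ x in Set.Ioi y, deriv f x * G x := by
  have hGc : Continuous G := hG.continuous
  have hG'c : Continuous (deriv G) := hG.continuous_deriv (by exact_mod_cast le_top)
  have h1 : Integrable (fun x => deriv f x * G x) :=
    (hfc.mul hGc).integrable_of_hasCompactSupport hGs.mul_left
  have h2 : Integrable (fun x => f x * deriv G x) :=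
    (hfd.continuous.mul hG'c).integrable_of_hasCompactSupport hGs.deriv.mul_left
  have hF : HasCompactSupport (fun x => f x * G x) := hGs.mul_left
  have key : ∫ x in Set.Ioi y, (deriv f x * G x + f x * deriv G x) = 0 - (f y * G y) := by
    apply integral_Ioi_of_hasDerivAt_of_tendsto
      (hfd.continuous.mul hGc).continuousWithinAt
      (fun x _ => ((hfd x).hasDerivAt.mul (hG.differentiable (by simp) x).hasDerivAt))
      ((h1.add h2).integrableOn)
      (tendsto_zero_of_hcs hF)
  rw [integral_add h1.integrableOn h2.integrableOn] at key
  linarith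

lemma contdiff_top_iter {g : ℝ → ℝ} (hg : ContDiff ℝ (⊤ : ℕ∞) g) (n : ℕ) :
    ContDiff ℝ (⊤ : ℕ∞) (iteratedDeriv n g) := by
  induction n with
  | zero => simpa using hg
  | succ n ih =>
    rw [iteratedDeriv_succ]
    have : ContDiff ℝ ((⊤ : ℕ∞) : WithTop ℕ∞) (iteratedDeriv n g) := by exact_mod_cast ih
    exact_mod_cast (contDiff_infty_iff_deriv.mp this).2

lemma shift_derivs (g : ℝ → ℝ) (hg : ContDiff ℝ (⊤ : ℕ∞) g) (hgs : HasCompactSupport g) (y : ℝ) :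
    ∀ (n : ℕ) (f : ℝ → ℝ), ContDiff ℝ (n : ℕ∞) f →
    ∫ x in Set.Ioi y, f x * ((-1 : ℝ) ^ n * iteratedDeriv n g x)
      = (∑ j ∈ Finset.range n,
          (-1 : ℝ) ^ (n - 1 - j) * iteratedDeriv j f y * iteratedDeriv (n - 1 - j) g y)
        + ∫ x in Set.Ioi y, iteratedDeriv n f x * g x := by
  intro n
  induction n with
  | zero => intro f hf; simp
  | succ n ih =>
    intro f hf
    have hf' : Differentiable ℝ f := hf.differentiable (by simp)
    have hfd : ContDiff ℝ (n : ℕ∞) (deriv f) := by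
      have : ContDiff ℝ ((n : WithTop ℕ∞) + 1) f := by exact_mod_cast hf
      exact_mod_cast (contDiff_succ_iff_deriv.mp this).2.2
    have hfc : Continuous (deriv f) := hfd.continuous
    have hGn : ContDiff ℝ (⊤ : ℕ∞) (iteratedDeriv n g) := contdiff_top_iter hg n
    have step : ∫ x in Set.Ioi y, f x * deriv (iteratedDeriv n g) x
        = -(f y * iteratedDeriv n g y) - ∫ x in Set.Ioi y, deriv f x * iteratedDeriv n g x :=
      ibp_Ioi f (iteratedDeriv n g) hf' hfc hGn (hcs_iter hgs n) y
    have lhs_eq : ∫ x in Set.Ioi y, f x * ((-1 : ℝ) ^ (n+1) * iteratedDeriv (n+1) g x)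
        = (-1:ℝ)^(n+1) * ∫ x in Set.Ioi y, f x * deriv (iteratedDeriv n g) x := by
      rw [← integral_const_mul]
      congr 1; funext x; rw [iteratedDeriv_succ]; ring
    have ihappl := ih (deriv f) hfd
    have pull : ∫ x in Set.Ioi y, deriv f x * ((-1 : ℝ) ^ n * iteratedDeriv n g x)
        = (-1:ℝ)^n * ∫ x in Set.Ioi y, deriv f x * iteratedDeriv n g x := by
      rw [← integral_const_mul]; congr 1; funext x; ring
    rw [pull] at ihappl
    have hiter : ∀ j, iteratedDeriv j (deriv f) = iteratedDeriv (j+1) f := by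
      intro j; rw [iteratedDeriv_succ']
    rw [lhs_eq, step]
    have e1 : (-1:ℝ)^(n+1) * (-(f y * iteratedDeriv n g y)
          - ∫ x in Set.Ioi y, deriv f x * iteratedDeriv n g x)
        = (-1:ℝ)^n * (f y * iteratedDeriv n g y)
          + (-1:ℝ)^n * ∫ x in Set.Ioi y, deriv f x * iteratedDeriv n g x := by ring
    rw [e1, ihappl]
    have sumeq : (∑ j ∈ Finset.range (n+1),
          (-1 : ℝ) ^ (n + 1 - 1 - j) * iteratedDeriv j f y * iteratedDeriv (n + 1 - 1 - j) g y)
        = (∑ j ∈ Finset.range n,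
          (-1 : ℝ) ^ (n - 1 - j) * iteratedDeriv j (deriv f) y * iteratedDeriv (n - 1 - j) g y)
          + (-1:ℝ)^n * (f y * iteratedDeriv n g y) := by
      rw [Finset.sum_range_succ']
      congr 1
      · apply Finset.sum_congr rfl
        intro j hj
        rw [hiter j]
        have hjn : j < n := Finset.mem_range.mp hj
        have : n + 1 - 1 - (j + 1) = n - 1 - j := by omega
        rw [this]
      · simp [mul_assoc]
    rw [sumeq, iteratedDeriv_succ' (n := n) (f := f)]
    ring

lemma linfac (c : ℝ → ℝ) {N : ℕ} (hc : ContDiff ℝ (N : ℕ∞) c) (y : ℝ) :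
    ∀ i, i ≤ N → iteratedDeriv i (fun u => (u - y) * c u)
      = fun x => (x - y) * iteratedDeriv i c x + (i : ℝ) * iteratedDeriv (i - 1) c x := by
  intro i
  induction i with
  | zero => intro _; funext x; simp
  | succ i ih =>
    intro hi
    have hIH := ih (by omega)
    funext x
    rw [iteratedDeriv_succ, hIH]
    have hdi : DifferentiableAt ℝ (iteratedDeriv i c) x :=
      (hc.differentiable_iteratedDeriv i (by exact_mod_cast (show i < N by omega)) x)
    have hdi' : DifferentiableAt ℝ (iteratedDeriv (i - 1) c) x :=
      (hc.differentiable_iteratedDeriv (i - 1) (Nat.cast_lt.mpr (show i - 1 < N by omega)) x)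
    have h1 : HasDerivAt (fun x => (x - y) * iteratedDeriv i c x)
        (1 * iteratedDeriv i c x + (x - y) * deriv (iteratedDeriv i c) x) x :=
      (((hasDerivAt_id x).sub_const y)).mul hdi.hasDerivAt
    have h2 : HasDerivAt (fun x => (i : ℝ) * iteratedDeriv (i - 1) c x)
        ((i : ℝ) * deriv (iteratedDeriv (i - 1) c) x) x :=
      hdi'.hasDerivAt.const_mul _
    rw [(show HasDerivAt (fun x => (x - y) * iteratedDeriv i c x + (i : ℝ) * iteratedDeriv (i - 1) c x) (1 * iteratedDeriv i c x + (x - y) * deriv (iteratedDeriv i c) x + (i : ℝ) * deriv (iteratedDeriv (i - 1) c) x) x from h1.add h2).deriv]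
    have e2 : (i : ℝ) * deriv (iteratedDeriv (i - 1) c) x = (i : ℝ) * iteratedDeriv i c x := by
      rcases Nat.eq_zero_or_pos i with h0 | h0
      · subst h0; simp
      · congr 1
        rw [← iteratedDeriv_succ]
        congr 1
        omega
    rw [e2, ← iteratedDeriv_succ]
    push_cast
    try simp only [Nat.add_sub_cancel]
    ring

lemma powfac (y : ℝ) : ∀ (m : ℕ) (N : ℕ) (c : ℝ → ℝ), ContDiff ℝ (N : ℕ∞) c → ∀ j, j ≤ N →
    iteratedDeriv j (fun u => (u - y) ^ m * c u) y
      = if m ≤ j then (j.choose m : ℝ) * (m.factorial : ℝ) * iteratedDeriv (j - m) c y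
        else 0 := by
  intro m
  induction m with
  | zero =>
    intro N c hc j hj
    simp only [pow_zero, one_mul, Nat.zero_le, if_true, Nat.choose_zero_right,
      Nat.factorial_zero, Nat.cast_one, Nat.sub_zero]
    try ring
  | succ m ih =>
    intro N c hc j hj
    set c' : ℝ → ℝ := fun u => (u - y) * c u with hc'def
    have hc' : ContDiff ℝ (N : ℕ∞) c' :=
      ((contDiff_id.sub contDiff_const).of_le le_top).mul hc
    have hfe : (fun u => (u - y) ^ (m + 1) * c u) = (fun u => (u - y) ^ m * c' u) := by
      funext u; simp only [hc'def]; ring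
    rw [hfe, ih N c' hc' j hj]
    have hDc' : iteratedDeriv (j - m) c' y = ((j - m : ℕ) : ℝ) * iteratedDeriv (j - m - 1) c y := by
      rw [linfac c hc y (j - m) (by omega)]
      simp
    by_cases h : m + 1 ≤ j
    · have hm : m ≤ j := by omega
      rw [if_pos hm, if_pos h, hDc']
      have hnat : j.choose m * m.factorial * (j - m) = j.choose (m + 1) * (m + 1).factorial := by
        calc j.choose m * m.factorial * (j - m) = j.choose m * (j - m) * m.factorial := by ring
          _ = j.choose (m + 1) * (m + 1) * m.factorial := by rw [Nat.choose_succ_right_eq]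
          _ = j.choose (m + 1) * (m + 1).factorial := by rw [Nat.factorial_succ]; ring
      have hcast : (j.choose m : ℝ) * (m.factorial : ℝ) * ((j - m : ℕ) : ℝ)
          = (j.choose (m + 1) : ℝ) * ((m + 1).factorial : ℝ) := by exact_mod_cast hnat
      rw [show j - (m + 1) = j - m - 1 from by omega]
      calc (j.choose m : ℝ) * (m.factorial : ℝ)
            * (((j - m : ℕ) : ℝ) * iteratedDeriv (j - m - 1) c y)
          = ((j.choose m : ℝ) * (m.factorial : ℝ) * ((j - m : ℕ) : ℝ))
            * iteratedDeriv (j - m - 1) c y := by ring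
        _ = (j.choose (m + 1) : ℝ) * ((m + 1).factorial : ℝ) * iteratedDeriv (j - m - 1) c y := by
            rw [hcast]
    · rw [if_neg h]
      by_cases hm : m ≤ j
      · have : j = m := by omega
        subst this
        rw [if_pos le_rfl, hDc']
        simp
      · rw [if_neg hm]

/-- Integration-by-parts identity for the k-th order dual of the drift operator `b(x) d/dx`. -/
theorem stmt13 (k : ℕ) (hk : 2 ≤ k)
    (b : ℝ → ℝ) (hb : ContDiff ℝ (k : ℕ∞) b)
    (g : ℝ → ℝ) (hg : ContDiff ℝ (⊤ : ℕ∞) g) (hgs : HasCompactSupport g) (y : ℝ) :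
    (∫ x in Set.Ioi y,
        (x - y) ^ (k - 2) / (Nat.factorial (k - 2) : ℝ) * b x
          * ((-1 : ℝ) ^ k * iteratedDeriv k g x))
      = -(b y * deriv g y) + ((k : ℝ) - 1) * deriv b y * g y
        + ∫ x in Set.Ioi y,
            g x * iteratedDeriv k
              (fun u => (u - y) ^ (k - 2) / (Nat.factorial (k - 2) : ℝ) * b u) x := by
  obtain ⟨m, rfl⟩ : ∃ m, k = m + 2 := ⟨k - 2, by omega⟩
  simp only [Nat.add_sub_cancel]
  set φ : ℝ → ℝ := fun u => (u - y) ^ m / (Nat.factorial m : ℝ) * b u with hφdef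
  have hφ : ContDiff ℝ ((m + 2 : ℕ) : ℕ∞) φ :=
    ((((contDiff_id.sub contDiff_const).pow m).div_const _).of_le le_top).mul hb
  have key := shift_derivs g hg hgs y (m + 2) φ hφ
  set c : ℝ → ℝ := fun u => b u / (Nat.factorial m : ℝ) with hcdef
  have hc : ContDiff ℝ ((m + 2 : ℕ) : ℕ∞) c := hb.div_const _
  have hφc : φ = fun u => (u - y) ^ m * c u := by funext u; simp only [hφdef, hcdef]; ring
  have hfacne : (Nat.factorial m : ℝ) ≠ 0 := Nat.cast_ne_zero.mpr m.factorial_ne_zero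
  have hD : ∀ j, j ≤ m + 2 → iteratedDeriv j φ y
      = if m ≤ j then (j.choose m : ℝ) * (m.factorial : ℝ) * iteratedDeriv (j - m) c y
        else 0 := by
    intro j hj
    rw [hφc]
    exact powfac y m (m + 2) c hc j hj
  have hDm : iteratedDeriv m φ y = b y := by
    rw [hD m (by omega), if_pos le_rfl]
    simp only [Nat.choose_self, Nat.cast_one, Nat.sub_self, iteratedDeriv_zero, hcdef]
    field_simp
  have hDm1 : iteratedDeriv (m + 1) φ y = ((m : ℝ) + 1) * deriv b y := by
    rw [hD (m + 1) (by omega), if_pos (by omega)]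
    rw [show m + 1 - m = 1 from by omega, iteratedDeriv_one]
    have : deriv c y = deriv b y / (Nat.factorial m : ℝ) := by
      simp only [hcdef]; exact deriv_div_const _
    rw [this, Nat.choose_succ_self_right]
    push_cast
    field_simp
  have hD0 : ∀ j, j < m → iteratedDeriv j φ y = 0 := by
    intro j hjm
    rw [hD j (by omega), if_neg (by omega)]
  have hsum : (∑ j ∈ Finset.range (m + 2),
        (-1 : ℝ) ^ (m + 2 - 1 - j) * iteratedDeriv j φ y * iteratedDeriv (m + 2 - 1 - j) g y)
      = -(b y * deriv g y) + ((m : ℝ) + 1) * deriv b y * g y := by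
    rw [Finset.sum_range_succ, Finset.sum_range_succ]
    have hz : (∑ j ∈ Finset.range m,
        (-1 : ℝ) ^ (m + 2 - 1 - j) * iteratedDeriv j φ y * iteratedDeriv (m + 2 - 1 - j) g y)
        = 0 := by
      apply Finset.sum_eq_zero
      intro j hj
      rw [hD0 j (Finset.mem_range.mp hj)]
      ring
    rw [hz, show m + 2 - 1 - m = 1 from by omega, show m + 2 - 1 - (m + 1) = 0 from by omega,
      hDm, hDm1, iteratedDeriv_one, iteratedDeriv_zero]
    ring
  rw [key, hsum]
  have hcomm : ∀ x : ℝ, iteratedDeriv (m + 2) φ x * g x = g x * iteratedDeriv (m + 2) φ x :=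
    fun x => mul_comm _ _
  simp_rw [hcomm]
  push_cast
  ring
end

section
/- Let k ≥ 1 be an integer and let μ be a finite Borel measure on ℝ such that h(x) = ∫_ℝ f_k(x,w) μ(dw) is finite for every x ∈ ℝ. Then all k-th order forward finite differences of h are nonnegative: for every x ∈ ℝ and every δ > 0, Σ_{j=0}^{k} (−1)^{k−j} C(k,j) h(x + jδ) ≥ 0, where C(k,j) is the binomial coefficient. (In particular, if a Markov family on ℝ admits a dual of order k, so that E(X_t^x − y)_+^{k−1} = ∫ f_k(x,w) q_t(y,dw) for Markov kernels q_t, then it is stochastically monotone of order k in the finite-difference sense.) -/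
open MeasureTheory

/-- The duality function of integer order `k ≥ 1`: `f_k(x,y) = (x-y)^{k-1}` for `x > y`,
`0` for `x < y`, with `f_k(x,x) = 0` for `k > 1` and `f_1(x,y) = 1_{x ≥ y}`. -/
noncomputable def fdualNat (k : ℕ) (x y : ℝ) : ℝ :=
  if k = 1 then (if y ≤ x then 1 else 0) else (if y < x then (x - y) ^ (k - 1) else 0)

open scoped fwdDiff

lemma fdualNat_succ_eq (m : ℕ) (hm : 1 ≤ m) (x w : ℝ) :
    fdualNat (m + 1) x w = (max (x - w) 0) ^ m := by
  unfold fdualNat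
  rw [if_neg (by omega)]
  rcases lt_or_ge w x with h | h
  · rw [if_pos h, max_eq_left (by linarith), Nat.add_sub_cancel]
  · rw [if_neg (not_lt.2 h), max_eq_right (by linarith), zero_pow (by omega)]

lemma fdualNat_mono (m : ℕ) (hm : 1 ≤ m) (w : ℝ) : Monotone (fun x => fdualNat m x w) := by
  rcases eq_or_lt_of_le hm with rfl | h2
  · intro a b hab
    by_cases h : w ≤ a
    · simp [fdualNat, h, le_trans h hab]
    · simp [fdualNat, h]
      split_ifs <;> norm_num
  · obtain ⟨n, rfl⟩ : ∃ n, m = n + 1 := ⟨m - 1, by omega⟩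
    have hn : 1 ≤ n := by omega
    intro a b hab
    simp only [fdualNat_succ_eq n hn]
    have : max (a - w) 0 ≤ max (b - w) 0 := max_le_max (by linarith) le_rfl
    exact pow_le_pow_left₀ (le_max_right _ _) this n

lemma fdualNat_nonneg (m : ℕ) (x w : ℝ) : 0 ≤ fdualNat m x w := by
  unfold fdualNat
  split_ifs with h1 h2 h3 <;> try norm_num
  exact pow_nonneg (by linarith) _

/-- FTC step: the forward difference of `fdualNat (m+1)` is an integral of `fdualNat m`. -/
lemma fdual_ftc (m : ℕ) (hm : 1 ≤ m) (w a b : ℝ) (hab : a ≤ b) :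
    (∫ s in a..b, (m : ℝ) * fdualNat m s w)
      = fdualNat (m + 1) b w - fdualNat (m + 1) a w := by
  refine intervalIntegral.integral_eq_sub_of_hasDeriv_right_of_le (f := fun s => fdualNat (m + 1) s w) hab ?_ ?_ ?_
  · have : (fun s => fdualNat (m + 1) s w) = fun s => (max (s - w) 0) ^ m :=
      funext fun s => fdualNat_succ_eq m hm s w
    rw [this]
    exact (((continuous_id.sub continuous_const).max continuous_const).pow m).continuousOn
  · intro t _
    have hkey : ∀ t : ℝ, w ≤ t → (m : ℝ) * (t - w) ^ (m - 1) = (m : ℝ) * fdualNat m t w := by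
      intro t ht
      congr 1
      rcases eq_or_lt_of_le hm with rfl | h2
      · simp [fdualNat, ht]
      · obtain ⟨n, rfl⟩ : ∃ n, m = n + 1 := ⟨m - 1, by omega⟩
        have hn : 1 ≤ n := by omega
        rw [fdualNat_succ_eq n hn, Nat.add_sub_cancel]
        rcases eq_or_lt_of_le ht with rfl | hlt
        · rw [sub_self, max_self, zero_pow (by omega)]
        · rw [max_eq_left (by linarith)]
    rcases lt_or_ge t w with htw | htw
    · -- locally zero
      have hev : (fun s => fdualNat (m + 1) s w) =ᶠ[nhds t] fun _ => (0 : ℝ) := by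
        filter_upwards [Iio_mem_nhds htw] with s hs
        rw [fdualNat_succ_eq m hm, max_eq_right (by simp at hs; linarith), zero_pow (by omega)]
      have h0 : HasDerivAt (fun s => fdualNat (m + 1) s w) 0 t :=
        (hasDerivAt_const t (0 : ℝ)).congr_of_eventuallyEq hev
      have : (m : ℝ) * fdualNat m t w = 0 := by
        have : fdualNat m t w = 0 := by
          unfold fdualNat
          split_ifs with h1 h2 <;> first | rfl | (exfalso; linarith)
        rw [this, mul_zero]
      rw [this]
      exact h0.hasDerivWithinAt
    · -- t ≥ w : agrees with the polynomial `(· - w) ^ m` on `[t, ∞)`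
      have hp : HasDerivAt (fun s : ℝ => (s - w) ^ m)
          ((m : ℝ) * (t - w) ^ (m - 1) * 1) t :=
        (((hasDerivAt_id t).sub_const w).pow m)
      rw [mul_one] at hp
      have := hp.hasDerivWithinAt (s := Set.Ioi t)
      rw [hkey t htw] at this
      refine this.congr ?_ ?_
      · intro y hy
        rw [fdualNat_succ_eq m hm, max_eq_left (by simp at hy; linarith)]
      · rw [fdualNat_succ_eq m hm, max_eq_left (by linarith)]
  · exact (((fdualNat_mono m hm w).intervalIntegrable).const_mul _)

/-- Real version of `fwdDiff_iter_eq_sum_shift`. -/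
lemma fwdDiff_iter_real (δ : ℝ) (f : ℝ → ℝ) (n : ℕ) (y : ℝ) :
    (fwdDiff δ)^[n] f y
      = ∑ j ∈ Finset.range (n + 1), (-1 : ℝ) ^ (n - j) * (n.choose j : ℝ) * f (y + j * δ) := by
  rw [fwdDiff_iter_eq_sum_shift]
  refine Finset.sum_congr rfl fun j hj => ?_
  rw [zsmul_eq_mul, nsmul_eq_mul]
  push_cast
  ring

/-- The key pointwise lemma: all `k`-th forward differences of `x ↦ fdualNat k x w`
are nonnegative. -/
lemma fdual_fwdDiff_nonneg (k : ℕ) (hk : 1 ≤ k) (w δ : ℝ) (hδ : 0 < δ) :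
    ∀ x : ℝ, 0 ≤ (fwdDiff δ)^[k] (fun x => fdualNat k x w) x := by
  induction k, hk using Nat.le_induction with
  | base =>
      intro x
      rw [Function.iterate_one, fwdDiff, sub_nonneg]
      exact fdualNat_mono 1 le_rfl w (by linarith : x ≤ x + δ)
  | succ m hm IH =>
      intro x
      rw [Function.iterate_succ_apply]
      have hΔ : fwdDiff δ (fun x => fdualNat (m + 1) x w)
          = fun y => (m : ℝ) * ∫ s in (0:ℝ)..δ, fdualNat m (y + s) w := by
        funext y
        rw [fwdDiff]
        rw [← fdual_ftc m hm w y (y + δ) (by linarith)]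
        rw [intervalIntegral.integral_const_mul]
        congr 1
        rw [intervalIntegral.integral_comp_add_left (fun s => fdualNat m s w) y]
        norm_num
      rw [hΔ, fwdDiff_iter_real]
      have hswap : ∀ j ∈ Finset.range (m + 1),
          (-1 : ℝ) ^ (m - j) * (m.choose j : ℝ)
              * ((m : ℝ) * ∫ s in (0:ℝ)..δ, fdualNat m (x + j * δ + s) w)
            = ∫ s in (0:ℝ)..δ,
              (m : ℝ) * ((-1 : ℝ) ^ (m - j) * (m.choose j : ℝ) * fdualNat m ((x + s) + j * δ) w) := by
        intro j _
        rw [intervalIntegral.integral_const_mul]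
        rw [intervalIntegral.integral_const_mul]
        have : (fun s => fdualNat m (x + j * δ + s) w)
            = fun s => fdualNat m ((x + s) + j * δ) w := by
          funext s; ring_nf
        rw [this]
        ring
      rw [Finset.sum_congr rfl hswap, ← intervalIntegral.integral_finset_sum]
      · refine intervalIntegral.integral_nonneg (le_of_lt hδ) fun s _ => ?_
        have := IH (x + s)
        rw [fwdDiff_iter_real] at this
        calc (0:ℝ) ≤ (m : ℝ) * ∑ j ∈ Finset.range (m + 1),
              (-1 : ℝ) ^ (m - j) * (m.choose j : ℝ) * fdualNat m ((x + s) + j * δ) w :=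
            mul_nonneg (by positivity) this
          _ = _ := by rw [Finset.mul_sum]
      · intro j _
        have hmono : Monotone (fun s => fdualNat m ((x + s) + j * δ) w) := by
          intro a b hab
          exact fdualNat_mono m hm w (by linarith)
        exact ((hmono.intervalIntegrable).const_mul _).const_mul _

/-- If `h(x) = ∫ f_k(x,w) μ(dw)` is finite for a finite measure `μ`, then all
k-th order forward finite differences of `h` are nonnegative (stochastic monotonicity
of order `k` of any family admitting a dual of order `k`). -/
theorem stmt15 (k : ℕ) (hk : 1 ≤ k)
    (μ : Measure ℝ) [IsFiniteMeasure μ]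
    (hint : ∀ x : ℝ, Integrable (fun w => fdualNat k x w) μ) :
    ∀ x : ℝ, ∀ δ : ℝ, 0 < δ →
      0 ≤ ∑ j ∈ Finset.range (k + 1),
        (-1 : ℝ) ^ (k - j) * (k.choose j : ℝ) * ∫ w, fdualNat k (x + j * δ) w ∂μ := by
  intro x δ hδ
  have hswap : ∀ j ∈ Finset.range (k + 1),
      (-1 : ℝ) ^ (k - j) * (k.choose j : ℝ) * ∫ w, fdualNat k (x + j * δ) w ∂μ
        = ∫ w, (-1 : ℝ) ^ (k - j) * (k.choose j : ℝ) * fdualNat k (x + j * δ) w ∂μ := by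
    intro j _
    rw [MeasureTheory.integral_const_mul]
  rw [Finset.sum_congr rfl hswap, ← integral_finset_sum]
  · refine integral_nonneg fun w => ?_
    have := fdual_fwdDiff_nonneg k hk w δ hδ x
    rwa [fwdDiff_iter_real] at this
  · intro j _
    exact (hint _).const_mul _
end
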